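/- arXiv:0711.2397 — 4 statements merged into one kernel-verified Lean document; each statement's English description precedes it below -/
import Mathlib

section
/- Every vertex of a d-dimensional convex polytope is incident to at least d edges of the polytope. -/
open Set

open scoped Classical in
/-- The argmax face of a polytope is the convex hull of the argmax vertices. -/
lemma face_eq_convexHull {d : ℕ} (S : Finset (Fin d → ℝ)) (l : (Fin d → ℝ) →L[ℝ] ℝ) :
    {y ∈ convexHull ℝ (S : Set (Fin d → ℝ)) |
        ∀ z ∈ convexHull ℝ (S : Set (Fin d → ℝ)), l z ≤ l y} =
      convexHull ℝ
        ((S.filter fun s => ∀ z ∈ convexHull ℝ (S : Set (Fin d → ℝ)), l z ≤ l s) :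
          Set (Fin d → ℝ)) := by
  classical
  set G : Finset (Fin d → ℝ) :=
    S.filter (fun s => ∀ z ∈ convexHull ℝ (S : Set (Fin d → ℝ)), l z ≤ l s) with hGdef
  apply Set.Subset.antisymm
  · rintro y ⟨hy, hmax⟩
    rw [Finset.convexHull_eq] at hy
    obtain ⟨w, hw0, hw1, hwy⟩ := hy
    have hls : ∀ s ∈ S, l s ≤ l y := fun s hs =>
      hmax s (subset_convexHull ℝ (S : Set (Fin d → ℝ)) hs)
    have hyc : y = ∑ s ∈ S, w s • s := by
      rw [← hwy, Finset.centerMass_eq_of_sum_1 _ _ hw1]; rfl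
    have hly : l y = ∑ s ∈ S, w s * l s := by
      rw [hyc, map_sum]; simp [mul_comm]
    have hzero : ∀ s ∈ S, w s * (l y - l s) = 0 := by
      intro s hs
      have hsum : ∑ s ∈ S, w s * (l y - l s) = 0 := by
        have h2 : ∑ s ∈ S, w s * (l y - l s) = (∑ s ∈ S, w s) * l y - ∑ s ∈ S, w s * l s := by
          rw [Finset.sum_mul, ← Finset.sum_sub_distrib]; ring_nf
          exact Finset.sum_congr rfl fun _ _ => by ring
        rw [h2, hw1, one_mul, ← hly, sub_self]
      exact (Finset.sum_eq_zero_iff_of_nonneg (fun s hs =>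
        mul_nonneg (hw0 s hs) (sub_nonneg.2 (hls s hs)))).1 hsum s hs
    have hsubG : ∀ s ∈ S, w s ≠ 0 → s ∈ G := by
      intro s hs hws
      have h3 : l y - l s = 0 := by
        rcases mul_eq_zero.1 (hzero s hs) with h | h
        · exact absurd h hws
        · exact h
      have hlsy : l s = l y := by linarith [sub_eq_zero.1 h3]
      refine Finset.mem_filter.2 ⟨hs, fun z hz => ?_⟩
      rw [hlsy]; exact hmax z hz
    have hwG : ∑ s ∈ G, w s = 1 := by
      rw [← hw1]
      rw [hGdef]
      exact (Finset.sum_subset (Finset.filter_subset _ _)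
        (fun s hs hsG => by_contra fun h => hsG (hsubG s hs h)))
    have hcm : G.centerMass w id = y := by
      rw [← hwy]
      rw [hGdef]
      exact (Finset.centerMass_subset id (Finset.filter_subset _ _)
        (fun s hs hsG => by_contra fun h => hsG (hsubG s hs h)))
    rw [← hcm]
    exact G.centerMass_mem_convexHull (fun s hs => hw0 s (Finset.filter_subset _ _ hs))
      (by rw [hwG]; norm_num) (fun s hs => Finset.mem_coe.2 hs)
  · apply convexHull_min
    · rintro s hs
      rw [Finset.mem_coe, hGdef, Finset.mem_filter] at hs
      exact ⟨subset_convexHull ℝ _ hs.1, hs.2⟩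
    · have h4 : {y ∈ convexHull ℝ (S : Set (Fin d → ℝ)) |
          ∀ z ∈ convexHull ℝ (S : Set (Fin d → ℝ)), l z ≤ l y} =
          convexHull ℝ (S : Set (Fin d → ℝ)) ∩
            ⋂ z ∈ convexHull ℝ (S : Set (Fin d → ℝ)), {y | l z ≤ l y} := by
        ext y; simp [Set.mem_iInter]
      rw [h4]
      exact (convex_convexHull ℝ _).inter (convex_iInter fun z => convex_iInter fun _ =>
        convex_halfSpace_ge (l.isLinear) _)

/-- Extreme points of a convex hull avoid the hull of the rest. -/
lemma extremePoint_not_mem_convexHull_diff {d : ℕ} {A : Set (Fin d → ℝ)} {v : Fin d → ℝ}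
    (hv : v ∈ (convexHull ℝ A).extremePoints ℝ) :
    v ∉ convexHull ℝ (A \ {v}) := by
  intro hmem
  have h := ((convex_convexHull ℝ A).mem_extremePoints_iff_mem_diff_convexHull_diff).1 hv
  exact h.2 (convexHull_mono (Set.diff_subset_diff_left (subset_convexHull ℝ A)) hmem)

set_option maxHeartbeats 2000000 in
/-- **Minimum degree bound (consequence of Balinski's theorem).**
Every vertex of a `d`-dimensional convex polytope (a polytope in `ℝ^d` whose
affine span is all of `ℝ^d`) is incident to at least `d` edges, where an edge
is a `1`-dimensional exposed face. -/
theorem polytope_vertex_degree_ge_dim {d : ℕ} (P : Set (Fin d → ℝ))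
    (S : Finset (Fin d → ℝ)) (hP : P = convexHull ℝ (S : Set (Fin d → ℝ)))
    (hspan : affineSpan ℝ P = ⊤)
    (x : Fin d → ℝ) (hx : x ∈ P.extremePoints ℝ) :
    d ≤ {E : Set (Fin d → ℝ) |
          IsExposed ℝ P E ∧ x ∈ E ∧
          Module.finrank ℝ (vectorSpan ℝ E) = 1}.ncard := by
  classical
  subst hP
  rcases Nat.eq_zero_or_pos d with hd | hd
  · subst hd; exact Nat.zero_le _
  set P := convexHull ℝ (S : Set (Fin d → ℝ)) with hPdef
  have hxS : x ∈ S := extremePoints_convexHull_subset hx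
  have hxP : x ∈ P := hx.1
  -- the vector span of S is everything
  have hvs : vectorSpan ℝ (S : Set (Fin d → ℝ)) = ⊤ := by
    have h1 : affineSpan ℝ (S : Set (Fin d → ℝ)) = ⊤ := by
      rw [← affineSpan_convexHull]; exact hspan
    rw [← direction_affineSpan, h1, AffineSubspace.direction_top]
  have hfr : Module.finrank ℝ (Fin d → ℝ) = d := Module.finrank_fin_fun ℝ
  -- S has a point other than x
  have hS' : (S.erase x).Nonempty := by
    rw [Finset.nonempty_iff_ne_empty]
    intro h
    have hsub : (S : Set (Fin d → ℝ)) ⊆ {x} := by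
      rcases (Finset.erase_eq_empty_iff S x).1 h with h | h <;> simp [h]
    have : (⊤ : Submodule ℝ (Fin d → ℝ)) ≤ ⊥ := by
      rw [← hvs, ← vectorSpan_singleton (k := ℝ) x]
      exact vectorSpan_mono ℝ hsub
    have h2 := Submodule.finrank_mono this
    rw [finrank_top, finrank_bot, hfr] at h2
    omega
  -- separate x from the other points
  have hxK : x ∉ convexHull ℝ ((S.erase x : Finset _) : Set (Fin d → ℝ)) := by
    intro hmem
    refine extremePoint_not_mem_convexHull_diff hx ?_
    refine convexHull_mono ?_ hmem
    rw [Finset.coe_erase]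
    try exact Set.diff_subset_diff_left (subset_convexHull ℝ _)
  obtain ⟨f, c, hfb, hcx⟩ := geometric_hahn_banach_closed_point
    (convex_convexHull ℝ _) ((S.erase x).finite_toSet.isClosed_convexHull ℝ) hxK
  have hfs : ∀ s ∈ S.erase x, f s < c := fun s hs =>
    hfb s (subset_convexHull ℝ _ hs)
  have hfxc : (0:ℝ) < f x - c := by linarith
  -- the radial projection onto the hyperplane f = c
  set t : (Fin d → ℝ) → (Fin d → ℝ) :=
    fun s => x + ((f x - c) / (f x - f s)) • (s - x) with htdef
  have hα : ∀ s ∈ S.erase x, 0 < (f x - c) / (f x - f s) ∧ (f x - c) / (f x - f s) < 1 := by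
    intro s hs
    have h1 := hfs s hs
    constructor
    · exact div_pos hfxc (by linarith)
    · rw [div_lt_one (by linarith)]; linarith
  have hft : ∀ s ∈ S.erase x, f (t s) = c := by
    intro s hs
    have h1 := hfs s hs
    have hne : f x - f s ≠ 0 := by linarith
    rw [htdef]
    simp only [map_add, map_smul, map_sub, smul_eq_mul]
    field_simp
    ring
  have htP : ∀ s ∈ S.erase x, t s ∈ P := by
    intro s hs
    obtain ⟨h0, h1⟩ := hα s hs
    have heq : t s = (1 - (f x - c) / (f x - f s)) • x + ((f x - c) / (f x - f s)) • s := by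
      rw [htdef]
      simp only [smul_sub, sub_smul, one_smul]
      abel
    rw [heq]
    exact (convex_convexHull ℝ _) hxP
      (subset_convexHull ℝ _ (Finset.mem_coe.2 (Finset.mem_of_mem_erase hs)))
      (by linarith) (by linarith) (by ring)
  have htx : ∀ s ∈ S.erase x, t s ≠ x := by
    intro s hs h
    have := hft s hs
    rw [h] at this
    linarith
  set T : Finset (Fin d → ℝ) := (S.erase x).image t with hTdef
  have hTne : T.Nonempty := hS'.image t
  have hTP : (T : Set (Fin d → ℝ)) ⊆ P := by
    intro y hy
    rw [hTdef] at hy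
    obtain ⟨s, hs, rfl⟩ := Finset.mem_coe.1 hy |> Finset.mem_image.1
    exact htP s hs
  have hfT : ∀ y ∈ T, f y = c := by
    intro y hy
    obtain ⟨s, hs, rfl⟩ := Finset.mem_image.1 hy
    exact hft s hs
  set Q : Set (Fin d → ℝ) := convexHull ℝ (T : Set (Fin d → ℝ)) with hQdef
  set V : Set (Fin d → ℝ) := Q.extremePoints ℝ with hVdef
  have hVT : V ⊆ (T : Set (Fin d → ℝ)) := extremePoints_convexHull_subset
  have hVfin : V.Finite := T.finite_toSet.subset hVT
  have hQV : convexHull ℝ V = Q := by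
    have h1 := closure_convexHull_extremePoints
      (T.finite_toSet.isCompact_convexHull ℝ) (convex_convexHull ℝ _)
    rw [← hVdef] at h1
    rw [hQdef, ← h1, (hVfin.isClosed_convexHull ℝ).closure_eq]
  -- every extreme point of Q gives an edge of P through x
  have key : ∀ v ∈ V, ∃ E : Set (Fin d → ℝ),
      IsExposed ℝ P E ∧ x ∈ E ∧ Module.finrank ℝ (vectorSpan ℝ E) = 1 ∧
      v ∈ E ∧ ∀ p ∈ E, f p = c → p = v := by
    intro v hv
    have hvT : v ∈ T := hVT hv
    have hfv : f v = c := hfT v hvT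
    have hvx : v ≠ x := fun h => by rw [h] at hfv; linarith
    have hvP : v ∈ P := hTP hvT
    -- separate v from the other points of T
    have hvK : v ∉ convexHull ℝ ((T : Set (Fin d → ℝ)) \ {v}) :=
      extremePoint_not_mem_convexHull_diff (hQdef ▸ hv)
    obtain ⟨ψ, u, hub, huv⟩ := geometric_hahn_banach_closed_point
      (convex_convexHull ℝ _) ((T.finite_toSet.diff).isClosed_convexHull ℝ) hvK
    have hψT : ∀ y ∈ T, y ≠ v → ψ y < ψ v := by
      intro y hy hyv
      have : ψ y < u := hub y (subset_convexHull ℝ _ ⟨hy, hyv⟩)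
      linarith
    set β : ℝ := (ψ v - ψ x) / (f x - c) with hβdef
    set h : (Fin d → ℝ) →L[ℝ] ℝ := ψ + β • f with hhdef
    have happ : ∀ z, h z = ψ z + β * f z := by
      intro z; rw [hhdef]; simp
    have hhxv : h x = h v := by
      rw [happ, happ, hfv, hβdef]
      field_simp
      ring
    have hhT : ∀ y ∈ T, y ≠ v → h y < h v := by
      intro y hy hyv
      rw [happ, happ, hfv, hfT y hy]
      have := hψT y hy hyv
      linarith
    have hht : ∀ s ∈ S.erase x, h (t s) = h x + ((f x - c) / (f x - f s)) * (h s - h x) := by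
      intro s hs
      rw [htdef]
      simp only [map_add, map_smul, map_sub, smul_eq_mul]
    have htT : ∀ s ∈ S.erase x, t s ∈ T := by
      intro s hs
      rw [hTdef]
      exact Finset.mem_image_of_mem t hs
    have hhS : ∀ s ∈ S, h s ≤ h x := by
      intro s hs
      rcases eq_or_ne s x with rfl | hsx
      · exact le_refl _
      · have hse : s ∈ S.erase x := Finset.mem_erase.2 ⟨hsx, hs⟩
        have h1 := hht s hse
        have h2 : h (t s) ≤ h v := by
          rcases eq_or_ne (t s) v with h3 | h3
          · rw [h3]
          · exact le_of_lt (hhT _ (htT s hse) h3)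
        have h0 := (hα s hse).1
        rw [← hhxv] at h2
        by_contra hlt
        push_neg at hlt
        have h5 : 0 < ((f x - c) / (f x - f s)) * (h s - h x) :=
          mul_pos h0 (by linarith)
        linarith
    have hhEq : ∀ s ∈ S.erase x, h s = h x → t s = v := by
      intro s hs hsx
      by_contra h3
      have h1 := hht s hs
      have h2 := hhT _ (htT s hs) h3
      rw [hsx, sub_self, mul_zero, add_zero] at h1
      rw [h1] at h2
      linarith [hhxv]
    have hmaxS : ∀ z ∈ P, h z ≤ h x := by
      rw [hPdef]
      apply convexHull_min
      · exact fun s hs => hhS s hs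
      · exact convex_halfSpace_le (h.isLinear) (h x)
    set E : Set (Fin d → ℝ) := {y ∈ P | ∀ z ∈ P, h z ≤ h y} with hEdef
    have hxE : x ∈ E := ⟨hxP, hmaxS⟩
    have hvE : v ∈ E := ⟨hvP, fun z hz => (hmaxS z hz).trans_eq hhxv⟩
    have hEsub : E ⊆ (line[ℝ, x, v] : Set (Fin d → ℝ)) := by
      rw [hEdef, hPdef, face_eq_convexHull S h]
      apply convexHull_min
      · intro s hs
        rw [Finset.mem_coe, Finset.mem_filter] at hs
        obtain ⟨hsS, hsmax⟩ := hs
        have hshx : h s = h x :=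
          le_antisymm (hhS s hsS) (hsmax x hxP)
        rcases eq_or_ne s x with rfl | hsx
        · exact left_mem_affineSpan_pair ℝ _ _
        · have hse : s ∈ S.erase x := Finset.mem_erase.2 ⟨hsx, hsS⟩
          have htsv : t s = v := hhEq s hse hshx
          have hα0 := (hα s hse).1
          have hsv : s = ((f x - c) / (f x - f s))⁻¹ • (v - x) + x := by
            rw [← htsv, htdef]
            simp only
            rw [add_sub_cancel_left, inv_smul_smul₀ (ne_of_gt hα0)]
            abel
          rw [hsv]
          have h5 := smul_vsub_vadd_mem_affineSpan_pair (k := ℝ)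
            ((f x - c) / (f x - f s))⁻¹ x v
          simpa [vsub_eq_sub, vadd_eq_add] using h5
      · exact (affineSpan ℝ {x, v}).convex
    have hxv' : x - v ≠ 0 := sub_ne_zero.2 (Ne.symm hvx)
    have hvx' : v - x ≠ 0 := sub_ne_zero.2 hvx
    have hdim : Module.finrank ℝ (vectorSpan ℝ E) = 1 := by
      have hle : vectorSpan ℝ E ≤ ℝ ∙ (x - v) := by
        have h1 : affineSpan ℝ E ≤ line[ℝ, x, v] := affineSpan_le.2 hEsub
        have h2 := AffineSubspace.direction_le h1
        rw [direction_affineSpan, direction_affineSpan, vectorSpan_pair] at h2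
        simpa [vsub_eq_sub] using h2
      have hge : (ℝ ∙ (v - x)) ≤ vectorSpan ℝ E := by
        rw [Submodule.span_singleton_le_iff_mem]
        simpa [vsub_eq_sub] using vsub_mem_vectorSpan ℝ hvE hxE
      have ha := Submodule.finrank_mono hle
      have hb := Submodule.finrank_mono hge
      rw [finrank_span_singleton hxv'] at ha
      rw [finrank_span_singleton hvx'] at hb
      omega
    have huniq : ∀ p ∈ E, f p = c → p = v := by
      intro p hp hfp
      have h1 : p - x ∈ vectorSpan ℝ ({x, v} : Set (Fin d → ℝ)) := by
        have h0 := AffineSubspace.vsub_mem_direction (hEsub hp)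
          (left_mem_affineSpan_pair ℝ x v)
        rwa [direction_affineSpan, vsub_eq_sub] at h0
      rw [vectorSpan_pair, vsub_eq_sub, Submodule.mem_span_singleton] at h1
      obtain ⟨r, hr⟩ := h1
      have h2 : r * (f x - c) = f p - f x := by
        have h3 := congrArg f hr
        rw [map_smul, map_sub, map_sub, hfv] at h3
        simpa [smul_eq_mul] using h3
      have hr1 : r = -1 := by
        rw [hfp] at h2
        have h4 : (r + 1) * (f x - c) = 0 := by linarith [h2]
        rcases mul_eq_zero.1 h4 with h5 | h5
        · linarith
        · exfalso; linarith
      have h6 : p - x = v - x := by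
        rw [← hr, hr1]
        module
      have h7 : p = v := by
        have h8 := congrArg (fun w => w + x) h6
        simpa [sub_add_cancel] using h8
      exact h7
    exact ⟨E, fun _ => ⟨h, rfl⟩, hxE, hdim, hvE, huniq⟩
  have htT : ∀ s ∈ S.erase x, t s ∈ T := fun s hs => Finset.mem_image_of_mem t hs
  -- the set of candidate edges is finite
  set ES : Set (Set (Fin d → ℝ)) :=
    {E | IsExposed ℝ P E ∧ x ∈ E ∧ Module.finrank ℝ (vectorSpan ℝ E) = 1} with hESdef
  have hESfin : ES.Finite := by
    apply Set.Finite.subset ((S.powerset.finite_toSet).image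
      (fun G : Finset (Fin d → ℝ) => convexHull ℝ (G : Set (Fin d → ℝ))))
    rintro E ⟨hexp, hxE, -⟩
    obtain ⟨l, hl⟩ := hexp ⟨x, hxE⟩
    refine ⟨S.filter fun s => ∀ z ∈ convexHull ℝ (S : Set (Fin d → ℝ)), l z ≤ l s, ?_, ?_⟩
    · rw [Finset.mem_coe, Finset.mem_powerset]
      exact Finset.filter_subset _ _
    · rw [hl]
      exact (face_eq_convexHull S l).symm
  -- choose the edges
  choose! g hg1 hg2 hg3 hg4 hg5 using key
  have himg : g '' V ⊆ ES := by
    rintro _ ⟨v, hv, rfl⟩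
    exact ⟨hg1 v hv, hg2 v hv, hg3 v hv⟩
  have hinj : Set.InjOn g V := by
    intro v1 h1 v2 h2 heq
    have hv2g : v2 ∈ g v1 := heq ▸ hg4 v2 h2
    exact (hg5 v1 h1 v2 hv2g (hfT v2 (hVT h2))).symm
  have hVne : V.Nonempty := by
    by_contra hne
    rw [Set.not_nonempty_iff_eq_empty] at hne
    rw [hne, convexHull_empty] at hQV
    obtain ⟨y, hy⟩ := hTne
    have hyQ : y ∈ Q := subset_convexHull ℝ _ (Finset.mem_coe.2 hy)
    rw [← hQV] at hyQ
    exact hyQ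
  obtain ⟨s₀, hs₀⟩ := hS'
  -- the span estimate
  have hsup : (⊤ : Submodule ℝ (Fin d → ℝ)) ≤
      vectorSpan ℝ (T : Set (Fin d → ℝ)) ⊔ (ℝ ∙ (t s₀ - x)) := by
    rw [← hvs, vectorSpan_eq_span_vsub_set_right ℝ (Finset.mem_coe.2 hxS),
      Submodule.span_le]
    rintro u ⟨s, hs, rfl⟩
    simp only [vsub_eq_sub]
    rcases eq_or_ne s x with rfl | hsx
    · simp
    · have hse : s ∈ S.erase x := Finset.mem_erase.2 ⟨hsx, Finset.mem_coe.1 hs⟩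
      have hα0 := (hα s hse).1
      have hts : t s - x = ((f x - c) / (f x - f s)) • (s - x) := by
        rw [htdef]; simp only; rw [add_sub_cancel_left]
      have hdec : s - x = ((f x - c) / (f x - f s))⁻¹ •
          ((t s - t s₀) + (t s₀ - x)) := by
        have : (t s - t s₀) + (t s₀ - x) = t s - x := by abel
        rw [this, hts, inv_smul_smul₀ (ne_of_gt hα0)]
      rw [hdec]
      refine SetLike.mem_coe.2 (Submodule.smul_mem _ _ (Submodule.add_mem _
        (Submodule.mem_sup_left ?_) (Submodule.mem_sup_right ?_)))
      · simpa [vsub_eq_sub] using vsub_mem_vectorSpan ℝ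
          (Finset.mem_coe.2 (htT s hse)) (Finset.mem_coe.2 (htT s₀ hs₀))
      · exact Submodule.mem_span_singleton_self _
  have hrank : d ≤ Module.finrank ℝ (vectorSpan ℝ (T : Set (Fin d → ℝ))) + 1 := by
    have h1 := Submodule.finrank_mono hsup
    have h2 := Submodule.finrank_add_le_finrank_add_finrank
      (vectorSpan ℝ (T : Set (Fin d → ℝ))) (ℝ ∙ (t s₀ - x))
    have h3 : Module.finrank ℝ (ℝ ∙ (t s₀ - x)) ≤ 1 := by
      rw [finrank_span_singleton (sub_ne_zero.2 (htx s₀ hs₀))]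
    rw [finrank_top, hfr] at h1
    omega
  have hVsp : vectorSpan ℝ V = vectorSpan ℝ (T : Set (Fin d → ℝ)) := by
    have h1 : affineSpan ℝ V = affineSpan ℝ (T : Set (Fin d → ℝ)) := by
      rw [← affineSpan_convexHull V, hQV, hQdef, affineSpan_convexHull]
    rw [← direction_affineSpan, h1, direction_affineSpan]
  have hcard : Module.finrank ℝ (vectorSpan ℝ V) + 1 ≤ V.ncard := by
    have hVFne : hVfin.toFinset.Nonempty := by
      rwa [Set.Finite.toFinset_nonempty]
    have hc : hVfin.toFinset.card = (hVfin.toFinset.card - 1) + 1 :=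
      (Nat.succ_pred_eq_of_pos (Finset.card_pos.2 hVFne)).symm
    have h1 := finrank_vectorSpan_image_finset_le ℝ
      (id : (Fin d → ℝ) → (Fin d → ℝ)) hVfin.toFinset hc
    have himg2 : (↑(Finset.image (id : (Fin d → ℝ) → (Fin d → ℝ)) hVfin.toFinset) : Set (Fin d → ℝ)) = V := by
      rw [Finset.coe_image]
      simp [Set.Finite.coe_toFinset]
    rw [himg2] at h1
    have h2 : V.ncard = hVfin.toFinset.card := Set.ncard_eq_toFinset_card V hVfin
    omega
  calc d ≤ Module.finrank ℝ (vectorSpan ℝ (T : Set (Fin d → ℝ))) + 1 := hrank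
    _ = Module.finrank ℝ (vectorSpan ℝ V) + 1 := by rw [hVsp]
    _ ≤ V.ncard := hcard
    _ = (g '' V).ncard := (Set.ncard_image_of_injOn hinj).symm
    _ ≤ ES.ncard := Set.ncard_le_ncard himg hESfin
end

section
/- The Klee–Minty polytope in dimension d, defined by 0 ≤ x₁ ≤ 1 and (1/3)xᵢ ≤ x_{i+1} ≤ 1 − (1/3)xᵢ for 1 ≤ i < d, has exactly 2^d vertices, and it admits a strictly ascending path with respect to the objective function x ↦ x_d visiting all 2^d vertices. -/
open Set

/-- The Klee–Minty cube in dimension `d`: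
`0 ≤ x₁ ≤ 1` and `(1/3)xᵢ ≤ x_{i+1} ≤ 1 - (1/3)xᵢ` for `1 ≤ i < d`. -/
def kleeMinty (d : ℕ) : Set (Fin d → ℝ) :=
  {x | (∀ h : 0 < d, 0 ≤ x ⟨0, h⟩ ∧ x ⟨0, h⟩ ≤ 1) ∧
       ∀ (i : ℕ) (h : i + 1 < d),
         (1 / 3) * x ⟨i, Nat.lt_of_succ_lt h⟩ ≤ x ⟨i + 1, h⟩ ∧
         x ⟨i + 1, h⟩ ≤ 1 - (1 / 3) * x ⟨i, Nat.lt_of_succ_lt h⟩}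

namespace KMaux

noncomputable def val (ε : ℕ → Bool) : ℕ → ℝ
  | 0 => if ε 0 then 1 else 0
  | (i+1) => if ε (i+1) then 1 - val ε i / 3 else val ε i / 3

lemma val_bounds (ε : ℕ → Bool) : ∀ i, 0 ≤ val ε i ∧ val ε i ≤ 1 := by
  intro i; induction i with
  | zero => simp only [val]; split <;> norm_num
  | succ i ih => simp only [val]; split <;> constructor <;> nlinarith [ih.1, ih.2]

lemma mem_coords {d : ℕ} {x : Fin d → ℝ} (hx : x ∈ kleeMinty d) :
    ∀ i (h : i < d), 0 ≤ x ⟨i, h⟩ ∧ x ⟨i, h⟩ ≤ 1 := by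
  intro i; induction i with
  | zero => intro h; exact hx.1 h
  | succ i ih =>
      intro h
      have hi := ih (Nat.lt_of_succ_lt h)
      have hc := hx.2 i h
      constructor <;> nlinarith [hi.1, hi.2, hc.1, hc.2]

lemma vert_mem {d : ℕ} (ε : ℕ → Bool) : (fun i : Fin d => val ε i) ∈ kleeMinty d := by
  constructor
  · intro h
    exact val_bounds ε 0
  · intro i h
    have hb := val_bounds ε i
    show (1/3) * val ε i ≤ val ε (i+1) ∧ val ε (i+1) ≤ 1 - (1/3) * val ε i
    simp only [val]
    split <;> constructor <;> nlinarith [hb.1, hb.2]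

lemma km_convex (d : ℕ) : Convex ℝ (kleeMinty d) := by
  intro x hx y hy u v hu hv huv
  constructor
  · intro h
    have h1 := hx.1 h; have h2 := hy.1 h
    simp only [Pi.add_apply, Pi.smul_apply, smul_eq_mul]
    constructor <;> nlinarith [h1.1, h1.2, h2.1, h2.2]
  · intro i h
    have h1 := hx.2 i h; have h2 := hy.2 i h
    simp only [Pi.add_apply, Pi.smul_apply, smul_eq_mul]
    constructor <;> nlinarith [h1.1, h1.2, h2.1, h2.2]

lemma comb_aux {u v a y1 z1 : ℝ} (hu : 0 < u) (hv : 0 < v) (huv : u + v = 1)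
  (hy : 0 ≤ y1 - a) (hz : 0 ≤ z1 - a) (he : u*y1 + v*z1 = a) : y1 = a ∧ z1 = a := by
  have key : u * (y1 - a) + v * (z1 - a) = 0 := by
    calc u * (y1 - a) + v * (z1 - a) = (u*y1 + v*z1) - (u+v)*a := by ring
    _ = a - 1*a := by rw [huv, he]
    _ = 0 := by ring
  have h1 : 0 ≤ u * (y1 - a) := mul_nonneg hu.le hy
  have h2 : 0 ≤ v * (z1 - a) := mul_nonneg hv.le hz
  have e1 : u * (y1 - a) = 0 := by linarith
  have e2 : v * (z1 - a) = 0 := by linarith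
  constructor
  · rcases mul_eq_zero.mp e1 with h | h
    · exact absurd h hu.ne'
    · linarith
  · rcases mul_eq_zero.mp e2 with h | h
    · exact absurd h hv.ne'
    · linarith

lemma comb_bot {u v a y1 z1 : ℝ} (hu : 0 < u) (hv : 0 < v) (huv : u + v = 1)
  (hy : a ≤ y1) (hz : a ≤ z1) (he : u*y1 + v*z1 = a) : y1 = a ∧ z1 = a :=
  comb_aux hu hv huv (by linarith) (by linarith) he

lemma comb_top {u v a y1 z1 : ℝ} (hu : 0 < u) (hv : 0 < v) (huv : u + v = 1)
  (hy : y1 ≤ a) (hz : z1 ≤ a) (he : u*y1 + v*z1 = a) : y1 = a ∧ z1 = a := by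
  have := comb_aux hu hv huv (a := -a) (y1 := -y1) (z1 := -z1)
    (by linarith) (by linarith) (by linarith)
  constructor <;> linarith [this.1, this.2]

/-- a vertex is an extreme point -/
lemma vert_extreme {d : ℕ} (ε : ℕ → Bool) :
    (fun i : Fin d => val ε i) ∈ (kleeMinty d).extremePoints ℝ := by
  rw [mem_extremePoints]
  refine ⟨vert_mem ε, ?_⟩
  intro y hy z hz hseg
  obtain ⟨u, v, hu, hv, huv, hx⟩ := hseg
  have key : ∀ i (h : i < d), y ⟨i, h⟩ = val ε i ∧ z ⟨i, h⟩ = val ε i := by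
    intro i; induction i with
    | zero =>
        intro h
        have he : u * y ⟨0, h⟩ + v * z ⟨0, h⟩ = val ε 0 := by
          have := congrFun hx ⟨0, h⟩
          simpa using this
        have hy0 := (mem_coords hy 0 h); have hz0 := (mem_coords hz 0 h)
        cases hε : ε 0 <;>
          simp only [val, hε, if_true, if_false, Bool.false_eq_true] at he ⊢
        · exact comb_bot hu hv huv hy0.1 hz0.1 he
        · exact comb_top hu hv huv hy0.2 hz0.2 he
    | succ i ih =>
        intro h
        have hih := ih (Nat.lt_of_succ_lt h)
        have he : u * y ⟨i+1, h⟩ + v * z ⟨i+1, h⟩ = val ε (i+1) := by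
          have := congrFun hx ⟨i+1, h⟩
          simpa using this
        have hcy := hy.2 i h; have hcz := hz.2 i h
        rw [hih.1] at hcy; rw [hih.2] at hcz
        cases hε : ε (i+1) <;>
          simp only [val, hε, if_true, if_false, Bool.false_eq_true] at he ⊢
        · exact comb_bot hu hv huv (by linarith [hcy.1]) (by linarith [hcz.1]) he
        · exact comb_top hu hv huv (by linarith [hcy.2]) (by linarith [hcz.2]) he
  constructor
  · funext i
    have := (key i.1 i.2).1
    simpa using this
  · funext i
    have := (key i.1 i.2).2
    simpa using this

/-- tightness predicate at level `i` -/
def TightAt (d : ℕ) (x : Fin d → ℝ) : ℕ → Prop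
  | 0 => ∀ h : 0 < d, x ⟨0, h⟩ = 0 ∨ x ⟨0, h⟩ = 1
  | (i+1) => ∀ h : i+1 < d,
      x ⟨i+1, h⟩ = (1/3) * x ⟨i, Nat.lt_of_succ_lt h⟩ ∨
      x ⟨i+1, h⟩ = 1 - (1/3) * x ⟨i, Nat.lt_of_succ_lt h⟩

open scoped Classical in
/-- perturbation coefficients -/
noncomputable def pc (d : ℕ) (x : Fin d → ℝ) (j : ℕ) : ℕ → ℝ
  | 0 => if j = 0 then 1 else 0
  | (m+1) =>
      if m+1 = j then 1
      else if m+1 < j then 0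
      else if hm : m+1 < d then
        (if x ⟨m+1, hm⟩ = 1 - (1/3) * x ⟨m, Nat.lt_of_succ_lt hm⟩
          then -(pc d x j m)/3 else (pc d x j m)/3)
      else 0

lemma pc_abs (d : ℕ) (x : Fin d → ℝ) (j : ℕ) : ∀ n, |pc d x j n| ≤ 1 := by
  intro n; induction n with
  | zero => simp only [pc]; split <;> simp
  | succ m ih =>
      have h3 : |(3:ℝ)| = 3 := by norm_num
      simp only [pc]
      split
      · simp
      split
      · simp
      split
      · split <;> simp only [abs_neg, abs_div, h3] <;> linarith [abs_nonneg (pc d x j m)]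
      · simp

lemma pc_j (d : ℕ) (x : Fin d → ℝ) (j : ℕ) : pc d x j j = 1 := by
  cases j with
  | zero => simp [pc]
  | succ m => simp [pc]

lemma pc_lt (d : ℕ) (x : Fin d → ℝ) (j : ℕ) : ∀ n, n < j → pc d x j n = 0 := by
  intro n; induction n with
  | zero => intro h; simp only [pc]; rw [if_neg (by omega)]
  | succ m ih =>
      intro h
      simp only [pc]
      rw [if_neg (by omega), if_pos h]



lemma perturb_mem {d : ℕ} {x : Fin d → ℝ} (hx : x ∈ kleeMinty d) {j : ℕ}
    (c : ℕ → ℝ) (hc0 : ∀ n, n < j → c n = 0) (hcj : c j = 1) (hcb : ∀ n, |c n| ≤ 1)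
    (hcstep : ∀ m (hm : m+1 < d), j ≤ m →
      (x ⟨m+1, hm⟩ = 1 - (1/3) * x ⟨m, Nat.lt_of_succ_lt hm⟩ ∧ c (m+1) = -(c m)/3) ∨
      (x ⟨m+1, hm⟩ = (1/3) * x ⟨m, Nat.lt_of_succ_lt hm⟩ ∧ c (m+1) = (c m)/3))
    (t : ℝ) (ht : |t| ≤ 1/6)
    (hj0 : ∀ h0 : 0 < d, j = 0 → |t| ≤ x ⟨0, h0⟩ ∧ |t| ≤ 1 - x ⟨0, h0⟩)
    (hjs : ∀ m (hm : m+1 < d), m+1 = j →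
      |t| ≤ x ⟨m+1, hm⟩ - (1/3) * x ⟨m, Nat.lt_of_succ_lt hm⟩ ∧
      |t| ≤ 1 - (1/3) * x ⟨m, Nat.lt_of_succ_lt hm⟩ - x ⟨m+1, hm⟩) :
    (fun i : Fin d => x i + t * c i) ∈ kleeMinty d := by
  have habs : ∀ n, |t * c n| ≤ 1/6 := fun n => by
    rw [abs_mul]
    calc |t| * |c n| ≤ (1/6) * 1 := mul_le_mul ht (hcb n) (abs_nonneg _) (by norm_num)
    _ = 1/6 := by norm_num
  have hta := neg_abs_le t
  have htb := le_abs_self t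
  constructor
  · intro h0
    show 0 ≤ x ⟨0,h0⟩ + t * c 0 ∧ x ⟨0,h0⟩ + t * c 0 ≤ 1
    rcases Nat.eq_zero_or_pos j with hj' | hj'
    · have hb := hj0 h0 hj'
      have hc : c 0 = 1 := hj' ▸ hcj
      rw [hc, mul_one]
      constructor <;> linarith [hb.1, hb.2]
    · rw [hc0 0 hj', mul_zero, add_zero]; exact hx.1 h0
  · intro m hm
    show (1/3) * (x ⟨m, Nat.lt_of_succ_lt hm⟩ + t * c m) ≤ x ⟨m+1,hm⟩ + t * c (m+1) ∧
      x ⟨m+1,hm⟩ + t * c (m+1) ≤ 1 - (1/3) * (x ⟨m, Nat.lt_of_succ_lt hm⟩ + t * c m)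
    rcases lt_trichotomy (m+1) j with hlt | heq | hgt
    · rw [hc0 (m+1) hlt, hc0 m (by omega)]
      simp only [mul_zero, add_zero]
      exact hx.2 m hm
    · have hcm : c m = 0 := hc0 m (by omega)
      have hcm1 : c (m+1) = 1 := heq ▸ hcj
      have hs := hjs m hm heq
      rw [hcm, hcm1]
      simp only [mul_zero, add_zero, mul_one]
      constructor <;> linarith [hs.1, hs.2]
    · have habm := abs_le.mp (habs m)
      rcases hcstep m hm (by omega) with ⟨hup, hc1⟩ | ⟨hlow, hc1⟩
      · have hb := mem_coords hx m (Nat.lt_of_succ_lt hm)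
        rw [hup, hc1]
        constructor <;> [nlinarith [habm.1, habm.2, hb.2]; nlinarith []]
      · have hb := mem_coords hx m (Nat.lt_of_succ_lt hm)
        rw [hlow, hc1]
        constructor <;> [nlinarith []; nlinarith [habm.1, habm.2, hb.2]]

lemma tight_of_ge {d : ℕ} {x : Fin d → ℝ} : ∀ i, d ≤ i → TightAt d x i := by
  intro i hi
  cases i with
  | zero => intro h0; exact absurd h0 (by omega)
  | succ m => intro h0; exact absurd h0 (by omega)

open scoped Classical in
lemma extreme_is_vert {d : ℕ} {x : Fin d → ℝ} (hx : x ∈ (kleeMinty d).extremePoints ℝ) :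
    ∃ ε : ℕ → Bool, x = fun i : Fin d => val ε i := by
  rw [mem_extremePoints] at hx
  obtain ⟨hxK, hext⟩ := hx
  by_cases hT : ∀ i, TightAt d x i
  · refine ⟨fun i => Nat.casesOn i
        (if h : 0 < d then (if x ⟨0,h⟩ = 1 then true else false) else false)
        (fun m => if h : m+1 < d then
          (if x ⟨m+1,h⟩ = 1 - (1/3) * x ⟨m, Nat.lt_of_succ_lt h⟩ then true else false)
          else false), ?_⟩
    set ε : ℕ → Bool := fun i => Nat.casesOn i
        (if h : 0 < d then (if x ⟨0,h⟩ = 1 then true else false) else false)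
        (fun m => if h : m+1 < d then
          (if x ⟨m+1,h⟩ = 1 - (1/3) * x ⟨m, Nat.lt_of_succ_lt h⟩ then true else false)
          else false) with hε
    have claim : ∀ i (h : i < d), x ⟨i, h⟩ = val ε i := by
      intro i; induction i with
      | zero =>
          intro h
          have hε0 : ε 0 = if x ⟨0,h⟩ = 1 then true else false := by
            rw [hε]
            show (if h' : 0 < d then (if x ⟨0,h'⟩ = 1 then true else false) else false) = _
            rw [dif_pos h]
          rcases hT 0 h with h0 | h1
          · have : ε 0 = false := by rw [hε0, if_neg (by rw [h0]; norm_num)]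
            simp only [val, this, Bool.false_eq_true, if_false]; exact h0
          · have : ε 0 = true := by rw [hε0, if_pos h1]
            simp only [val, this, if_true]; exact h1
      | succ m ih =>
          intro h
          have hxm := ih (Nat.lt_of_succ_lt h)
          have hεm : ε (m+1) = if x ⟨m+1,h⟩ = 1 - (1/3) * x ⟨m, Nat.lt_of_succ_lt h⟩
              then true else false := by
            rw [hε]
            show (if h' : m+1 < d then (if x ⟨m+1,h'⟩ = 1 - (1/3) * x ⟨m, Nat.lt_of_succ_lt h'⟩
              then true else false) else false) = _
            rw [dif_pos h]
          by_cases hup : x ⟨m+1,h⟩ = 1 - (1/3) * x ⟨m, Nat.lt_of_succ_lt h⟩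
          · have : ε (m+1) = true := by rw [hεm, if_pos hup]
            simp only [val, this, if_true]
            rw [hup, ← hxm]; ring
          · have h2 : ε (m+1) = false := by rw [hεm, if_neg hup]
            have hlow := (hT (m+1) h).resolve_right hup
            simp only [val, h2, Bool.false_eq_true, if_false]
            rw [hlow, ← hxm]; ring
    funext i
    have := claim i.1 i.2
    simpa using this
  · push_neg at hT
    obtain ⟨i0, hi0⟩ := hT
    have hiod : i0 < d := by
      by_contra hge
      exact hi0 (tight_of_ge i0 (by omega))
    set F : Finset ℕ := (Finset.range d).filter (fun i => ¬ TightAt d x i) with hF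
    have hne : F.Nonempty := ⟨i0, by simp [hF, Finset.mem_filter, Finset.mem_range, hiod, hi0]⟩
    set j := F.max' hne with hjdef
    have hjF : j ∈ F := F.max'_mem hne
    have hjd : j < d := by
      have := (Finset.mem_filter.mp hjF).1; exact Finset.mem_range.mp this
    have hjnt : ¬ TightAt d x j := (Finset.mem_filter.mp hjF).2
    have tight_above : ∀ i, j < i → TightAt d x i := by
      intro i hji
      by_contra hnt
      have hid : i < d := by
        by_contra hge
        exact hnt (tight_of_ge i (by omega))
      have : i ∈ F := Finset.mem_filter.mpr ⟨Finset.mem_range.mpr hid, hnt⟩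
      have := F.le_max' i this
      omega
    set c := pc d x j with hc
    have hcstep : ∀ m (hm : m+1 < d), j ≤ m →
        (x ⟨m+1, hm⟩ = 1 - (1/3) * x ⟨m, Nat.lt_of_succ_lt hm⟩ ∧ c (m+1) = -(c m)/3) ∨
        (x ⟨m+1, hm⟩ = (1/3) * x ⟨m, Nat.lt_of_succ_lt hm⟩ ∧ c (m+1) = (c m)/3) := by
      intro m hm hjm
      by_cases hup : x ⟨m+1, hm⟩ = 1 - (1/3) * x ⟨m, Nat.lt_of_succ_lt hm⟩
      · left
        refine ⟨hup, ?_⟩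
        rw [hc]; show pc d x j (m+1) = _
        simp only [pc]
        rw [if_neg (by omega), if_neg (by omega), dif_pos hm, if_pos hup]
      · right
        refine ⟨(tight_above (m+1) (by omega) hm).resolve_right hup, ?_⟩
        rw [hc]; show pc d x j (m+1) = _
        simp only [pc]
        rw [if_neg (by omega), if_neg (by omega), dif_pos hm, if_neg hup]
    have hexist : ∃ t : ℝ, 0 < t ∧ t ≤ 1/6 ∧
        (∀ h0 : 0 < d, j = 0 → t ≤ x ⟨0, h0⟩ ∧ t ≤ 1 - x ⟨0, h0⟩) ∧
        (∀ m (hm : m+1 < d), m+1 = j →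
          t ≤ x ⟨m+1, hm⟩ - (1/3) * x ⟨m, Nat.lt_of_succ_lt hm⟩ ∧
          t ≤ 1 - (1/3) * x ⟨m, Nat.lt_of_succ_lt hm⟩ - x ⟨m+1, hm⟩) := by
      cases hj' : j with
      | zero =>
          rw [hj'] at hjnt
          simp only [TightAt, not_forall, not_or] at hjnt
          obtain ⟨h0, hne0, hne1⟩ := hjnt
          have hb := mem_coords hxK 0 h0
          have hlt0 : 0 < x ⟨0, h0⟩ := lt_of_le_of_ne hb.1 (Ne.symm hne0)
          have hlt1 : x ⟨0, h0⟩ < 1 := lt_of_le_of_ne hb.2 hne1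
          refine ⟨min (1/6) (min (x ⟨0,h0⟩) (1 - x ⟨0,h0⟩)), ?_, min_le_left _ _, ?_, ?_⟩
          · apply lt_min (by norm_num)
            exact lt_min hlt0 (by linarith)
          · intro h0' _
            constructor
            · exact le_trans (min_le_right _ _) (min_le_left _ _)
            · exact le_trans (min_le_right _ _) (min_le_right _ _)
          · intro m hm hmj; omega
      | succ m0 =>
          rw [hj'] at hjnt
          simp only [TightAt, not_forall, not_or] at hjnt
          obtain ⟨hm0, hneL, hneU⟩ := hjnt
          have hcon := hxK.2 m0 hm0
          have hltL : (1/3) * x ⟨m0, Nat.lt_of_succ_lt hm0⟩ < x ⟨m0+1, hm0⟩ :=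
            lt_of_le_of_ne hcon.1 (Ne.symm hneL)
          have hltU : x ⟨m0+1, hm0⟩ < 1 - (1/3) * x ⟨m0, Nat.lt_of_succ_lt hm0⟩ :=
            lt_of_le_of_ne hcon.2 hneU
          refine ⟨min (1/6) (min (x ⟨m0+1,hm0⟩ - (1/3) * x ⟨m0, Nat.lt_of_succ_lt hm0⟩)
            (1 - (1/3) * x ⟨m0, Nat.lt_of_succ_lt hm0⟩ - x ⟨m0+1,hm0⟩)), ?_, min_le_left _ _, ?_, ?_⟩
          · apply lt_min (by norm_num)
            exact lt_min (by linarith) (by linarith)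
          · intro h0' habs; omega
          · intro m hm hmj
            have hmm : m = m0 := by omega
            subst hmm
            constructor
            · exact le_trans (min_le_right _ _) (min_le_left _ _)
            · exact le_trans (min_le_right _ _) (min_le_right _ _)
    obtain ⟨t, ht0, ht6, hj0, hjs⟩ := hexist
    have htabs : |t| = t := abs_of_pos ht0
    have htabs' : |(-t)| = t := by rw [abs_neg]; exact htabs
    have hy := perturb_mem hxK c (pc_lt d x j) (pc_j d x j) (pc_abs d x j) hcstep t
      (by rw [htabs]; exact ht6)
      (fun h0 hj' => by rw [htabs]; exact hj0 h0 hj')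
      (fun m hm hmj => by rw [htabs]; exact hjs m hm hmj)
    have hz := perturb_mem hxK c (pc_lt d x j) (pc_j d x j) (pc_abs d x j) hcstep (-t)
      (by rw [htabs']; exact ht6)
      (fun h0 hj' => by rw [htabs']; exact hj0 h0 hj')
      (fun m hm hmj => by rw [htabs']; exact hjs m hm hmj)
    have hseg : x ∈ openSegment ℝ (fun i : Fin d => x i + t * c i)
        (fun i : Fin d => x i + (-t) * c i) := by
      refine ⟨1/2, 1/2, by norm_num, by norm_num, by norm_num, ?_⟩
      funext i
      simp only [Pi.add_apply, Pi.smul_apply, smul_eq_mul]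
      ring
    have heq := (hext _ hy _ hz hseg).1
    have := congrFun heq ⟨j, hjd⟩
    simp only at this
    have hpcj : c (⟨j, hjd⟩ : Fin d).val = 1 := by
      show c j = 1
      exact pc_j d x j
    rw [hpcj, mul_one] at this
    linarith

lemma val_congr {ε ε' : ℕ → Bool} : ∀ i, (∀ j, j ≤ i → ε j = ε' j) → val ε i = val ε' i := by
  intro i; induction i with
  | zero => intro h; simp only [val, h 0 le_rfl]
  | succ i ih =>
      intro h
      simp only [val, h (i+1) le_rfl, ih (fun j hj => h j (hj.trans (Nat.le_succ i)))]

lemma val_inj {ε ε' : ℕ → Bool} : ∀ i, (∀ j, j ≤ i → val ε j = val ε' j) → ε i = ε' i := by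
  intro i; induction i with
  | zero =>
      intro h
      have h0 := h 0 le_rfl
      simp only [val] at h0
      cases hε : ε 0 <;> cases hε' : ε' 0 <;> rw [hε, hε'] at h0 <;> simp_all <;> norm_num at h0
  | succ i ih =>
      intro h
      have hi : val ε i = val ε' i := h i (Nat.le_succ i)
      have hs := h (i+1) le_rfl
      have hb := val_bounds ε i
      simp only [val, hi] at hs
      cases hε : ε (i+1) <;> cases hε' : ε' (i+1) <;> rw [hε, hε'] at hs <;> simp_all <;>
        linarith [hb.1, hb.2]

/-- embedding of sign patterns as vertices -/
noncomputable def Vemb (d : ℕ) (b : Fin d → Bool) : Fin d → ℝ :=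
  fun i => val (fun n => if h : n < d then b ⟨n, h⟩ else false) i

lemma Vemb_inj (d : ℕ) : Function.Injective (Vemb d) := by
  intro b b' hbb
  funext i
  have key := val_inj (ε := fun n => if h : n < d then b ⟨n, h⟩ else false)
    (ε' := fun n => if h : n < d then b' ⟨n, h⟩ else false) i.1
    (fun j hj => congrFun hbb ⟨j, lt_of_le_of_lt hj i.2⟩)
  simpa [i.2] using key

lemma extreme_eq_range (d : ℕ) :
    (kleeMinty d).extremePoints ℝ = Set.range (Vemb d) := by
  ext x
  constructor
  · intro hx
    obtain ⟨ε, rfl⟩ := extreme_is_vert hx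
    refine ⟨fun i => ε i.1, ?_⟩
    funext i
    exact val_congr i.1 (fun j hj => by
      simp only [dif_pos (lt_of_le_of_lt hj i.2)])
  · rintro ⟨b, rfl⟩
    exact vert_extreme _

lemma ncard_extreme (d : ℕ) : ((kleeMinty d).extremePoints ℝ).ncard = 2 ^ d := by
  rw [extreme_eq_range, ← Set.image_univ, Set.ncard_image_of_injective _ (Vemb_inj d),
    Set.ncard_univ, Nat.card_eq_fintype_card, Fintype.card_fun]
  simp

/-! ### Gray code bits -/

/-- the Gray code bit pattern of `k` -/
def gb (k : ℕ) : ℕ → Bool := fun i => (k.testBit i).xor (k.testBit (i+1))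

lemma xor_div_two (a b : ℕ) : (a ^^^ b) / 2 = a/2 ^^^ b/2 := by
  apply Nat.eq_of_testBit_eq
  intro i
  simp [Nat.testBit_div_two, Nat.testBit_xor]

lemma xor_decomp (a b : ℕ) : a ^^^ b = 2 * (a/2 ^^^ b/2) + ((a + b) % 2) := by
  have h2 := xor_div_two a b
  have hm : (a ^^^ b) % 2 = (a + b) % 2 := by
    have hb := Nat.testBit_xor a b 0
    simp only [Nat.testBit_zero] at hb
    rcases Nat.mod_two_eq_zero_or_one a with ha | ha <;>
      rcases Nat.mod_two_eq_zero_or_one b with hbb | hbb <;>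
      rcases Nat.mod_two_eq_zero_or_one (a ^^^ b) with hab | hab <;>
      rw [ha, hbb, hab] at hb <;> simp at hb <;> omega
  omega

lemma compl_xor : ∀ n k, k < 2^n → (2^n - 1) ^^^ k = 2^n - 1 - k := by
  intro n
  induction n with
  | zero => intro k hk; interval_cases k; rfl
  | succ n ih =>
      intro k hk
      have hp : 2^(n+1) = 2 * 2^n := by rw [pow_succ]; ring
      have hd : (2^(n+1) - 1) / 2 = 2^n - 1 := by omega
      have hk2 : k / 2 < 2^n := by omega
      have := xor_decomp (2^(n+1) - 1) k
      rw [hd, ih (k/2) hk2] at this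
      have hone : 2 ^ n ≠ 0 := by positivity
      omega

lemma testBit_false_of_lt {k n i : ℕ} (hk : k < 2^n) (hi : n ≤ i) : k.testBit i = false := by
  apply Nat.testBit_lt_two_pow
  calc k < 2^n := hk
  _ ≤ 2^i := Nat.pow_le_pow_right (by norm_num) hi

lemma testBit_top {k n : ℕ} (hk : k < 2^(n+1)) : k.testBit n = decide (2^n ≤ k) := by
  rw [Nat.testBit_eq_decide_div_mod_eq]
  have hp : 2^(n+1) = 2 * 2^n := by rw [pow_succ]; ring
  have h1 : k / 2^n < 2 := (Nat.div_lt_iff_lt_mul (Nat.two_pow_pos n)).mpr (by omega)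
  have : k / 2^n = if 2^n ≤ k then 1 else 0 := by
    split
    · have := (Nat.one_le_div_iff (Nat.two_pow_pos n)).mpr ‹2^n ≤ k›
      omega
    · exact Nat.div_eq_of_lt (by omega)
  rw [this]
  split <;> simp_all

lemma gb_top {k n : ℕ} (hk : k < 2^(n+1)) : gb k n = decide (2^n ≤ k) := by
  unfold gb
  rw [testBit_false_of_lt hk le_rfl, testBit_top hk, Bool.xor_false]

lemma gb_reflect {n k : ℕ} (hk : k < 2^(n+1)) :
    ∀ i, i + 1 < n + 1 → gb (2^(n+1) - 1 - k) i = gb k i := by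
  intro i hi
  have hc : 2^(n+1) - 1 - k = (2^(n+1) - 1) ^^^ k := (compl_xor (n+1) k hk).symm
  have ht : ∀ m, m < n+1 → ((2^(n+1) - 1 - k).testBit m) = !(k.testBit m) := by
    intro m hm
    rw [hc, Nat.testBit_xor, Nat.testBit_two_pow_sub_one, decide_eq_true hm]
    cases k.testBit m <;> rfl
  unfold gb
  rw [ht i (by omega), ht (i+1) hi]
  cases k.testBit i <;> cases k.testBit (i+1) <;> rfl

lemma val_mono : ∀ d, ∀ k l, k < l → l < 2^d →
    val (gb k) (d-1) < val (gb l) (d-1) := by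
  intro d
  induction d with
  | zero => intro k l h1 h2; omega
  | succ e ih =>
      intro k l hkl hl
      rcases Nat.eq_zero_or_pos e with rfl | he
      · have hl2 : l < 2 := by norm_num at hl; omega
        have hk0 : k = 0 := by omega
        have hl1 : l = 1 := by omega
        subst hk0; subst hl1
        simp only [Nat.add_sub_cancel]
        have h0 : gb 0 0 = false := by decide
        have h1 : gb 1 0 = true := by decide
        simp [val, h0, h1]
      · obtain ⟨f, rfl⟩ : ∃ f, e = f + 1 := ⟨e - 1, by omega⟩
        show val (gb k) (f+1) < val (gb l) (f+1)
        have hksm : k < 2^(f+1+1) := by omega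
        have hgk := gb_top (n := f+1) hksm
        have hgl := gb_top (n := f+1) hl
        have hbk := val_bounds (gb k) f
        have hbl := val_bounds (gb l) f
        by_cases hltop : 2^(f+1) ≤ l
        · rw [decide_eq_true hltop] at hgl
          by_cases hktop : 2^(f+1) ≤ k
          · rw [decide_eq_true hktop] at hgk
            set rk := 2^(f+1+1) - 1 - k with hrk
            set rl := 2^(f+1+1) - 1 - l with hrl
            have hrlk : rl < rk := by omega
            have hrkb : rk < 2^(f+1) := by
              have hp : 2^(f+1+1) = 2*2^(f+1) := by rw [pow_succ]; ring
              omega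
            have hek : val (gb rk) f = val (gb k) f :=
              val_congr f (fun j hj => gb_reflect hksm j (by omega))
            have hel : val (gb rl) f = val (gb l) f :=
              val_congr f (fun j hj => gb_reflect hl j (by omega))
            have hih := ih rl rk hrlk hrkb
            simp only [Nat.add_sub_cancel] at hih
            rw [hek, hel] at hih
            simp only [val, hgk, hgl, if_true]
            linarith
          · push_neg at hktop
            rw [decide_eq_false (by omega)] at hgk
            simp only [val, hgk, hgl, if_true, Bool.false_eq_true, if_false]
            linarith [hbk.2, hbl.2, hbk.1, hbl.1]
        · push_neg at hltop
          rw [decide_eq_false (by omega)] at hgl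
          rw [decide_eq_false (by omega)] at hgk
          simp only [val, hgk, hgl, Bool.false_eq_true, if_false]
          have hih := ih k l hkl hltop
          simp only [Nat.add_sub_cancel] at hih
          linarith

lemma succ_xor : ∀ k : ℕ, ∃ j, (k+1) ^^^ k = 2^(j+1) - 1 := by
  intro k
  induction k using Nat.strong_induction_on with
  | _ k ih =>
    rcases Nat.mod_two_eq_zero_or_one k with he | ho
    · refine ⟨0, ?_⟩
      have hd := xor_decomp (k+1) k
      rw [show (k+1)/2 = k/2 by omega, Nat.xor_self] at hd
      norm_num at hd ⊢
      omega
    · rcases Nat.eq_zero_or_pos k with rfl | hk0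
      · omega
      obtain ⟨j, hj⟩ := ih (k/2) (by omega)
      refine ⟨j+1, ?_⟩
      have hd := xor_decomp (k+1) k
      rw [show (k+1)/2 = k/2 + 1 by omega] at hd
      rw [hj] at hd
      have hp : 2^(j+1+1) = 2*2^(j+1) := by rw [pow_succ]; ring
      have hpos := Nat.two_pow_pos (j+1)
      omega

lemma gb_succ {k d : ℕ} (hk : k + 1 < 2^d) :
    ∃ j, j < d ∧ gb (k+1) j ≠ gb k j ∧ ∀ i, i ≠ j → gb (k+1) i = gb k i := by
  obtain ⟨j, hj⟩ := succ_xor k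
  have hjd : j < d := by
    have hxlt : (k+1) ^^^ k < 2^d := Nat.xor_lt_two_pow hk (by omega)
    rw [hj] at hxlt
    have hp : 2^(j+1) = 2*2^j := by rw [pow_succ]; ring
    have hpos := Nat.two_pow_pos j
    have hle : 2^j < 2^d := by omega
    exact (Nat.pow_lt_pow_iff_right (by norm_num)).mp hle
  have hbool : ∀ a b c : Bool, (a.xor b = c) → a = b.xor c := by decide
  have hbit : ∀ i, (k+1).testBit i = (k.testBit i).xor (decide (i ≤ j)) := by
    intro i
    have h1 : ((k+1) ^^^ k).testBit i = decide (i < j+1) := by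
      rw [hj, Nat.testBit_two_pow_sub_one]
    rw [Nat.testBit_xor] at h1
    rw [show decide (i < j + 1) = decide (i ≤ j) from decide_eq_decide.mpr (by omega)] at h1
    exact hbool _ _ _ h1
  have hxor2 : ∀ a b c : Bool, ((a.xor c).xor (b.xor c)) = a.xor b := by decide
  refine ⟨j, hjd, ?_, ?_⟩
  · unfold gb
    rw [hbit j, hbit (j+1)]
    rw [decide_eq_true (le_refl j), decide_eq_false (by omega : ¬ (j+1 ≤ j))]
    cases k.testBit j <;> cases k.testBit (j+1) <;> decide
  · intro i hij
    unfold gb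
    rw [hbit i, hbit (i+1)]
    rw [show decide (i+1 ≤ j) = decide (i ≤ j) from decide_eq_decide.mpr (by omega)]
    exact hxor2 _ _ _

/-! ### Exposed edges -/

noncomputable def Pc (d : ℕ) (x : Fin d → ℝ) (n : ℕ) : ℝ := if h : n < d then x ⟨n, h⟩ else 0

noncomputable def slackF (d : ℕ) (ε : ℕ → Bool) (n : ℕ) (x : Fin d → ℝ) : ℝ :=
  if n = 0 then (if ε 0 then 1 - Pc d x 0 else Pc d x 0)
  else (if ε n then 1 - (1/3) * Pc d x (n-1) - Pc d x n
        else Pc d x n - (1/3) * Pc d x (n-1))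

noncomputable def linF (d : ℕ) (ε : ℕ → Bool) (n : ℕ) (x : Fin d → ℝ) : ℝ :=
  if n = 0 then (if ε 0 then Pc d x 0 else -Pc d x 0)
  else (if ε n then (1/3) * Pc d x (n-1) + Pc d x n
        else (1/3) * Pc d x (n-1) - Pc d x n)

noncomputable def cstF (ε : ℕ → Bool) (n : ℕ) : ℝ :=
  if n = 0 then (if ε 0 then 1 else 0) else (if ε n then 1 else 0)

lemma slack_decomp (d : ℕ) (ε : ℕ → Bool) (n : ℕ) (x : Fin d → ℝ) :
    slackF d ε n x = cstF ε n - linF d ε n x := by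
  unfold slackF linF cstF
  split_ifs <;> ring

lemma Pc_add (d : ℕ) (x y : Fin d → ℝ) (n : ℕ) : Pc d (x + y) n = Pc d x n + Pc d y n := by
  unfold Pc; split <;> simp

lemma Pc_smul (d : ℕ) (c : ℝ) (x : Fin d → ℝ) (n : ℕ) : Pc d (c • x) n = c * Pc d x n := by
  unfold Pc; split <;> simp

lemma Pc_comb (d : ℕ) (u v : ℝ) (y z : Fin d → ℝ) (n : ℕ) :
    Pc d (u • y + v • z) n = u * Pc d y n + v * Pc d z n := by
  rw [Pc_add, Pc_smul, Pc_smul]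

lemma linF_add (d : ℕ) (ε : ℕ → Bool) (n : ℕ) (x y : Fin d → ℝ) :
    linF d ε n (x + y) = linF d ε n x + linF d ε n y := by
  unfold linF
  split_ifs <;> rw [Pc_add] <;> try rw [Pc_add]
  all_goals ring

lemma linF_smul (d : ℕ) (ε : ℕ → Bool) (n : ℕ) (c : ℝ) (x : Fin d → ℝ) :
    linF d ε n (c • x) = c * linF d ε n x := by
  unfold linF
  split_ifs <;> rw [Pc_smul] <;> try rw [Pc_smul]
  all_goals ring

/-- the exposing functional -/
noncomputable def Lf (d : ℕ) (ε : ℕ → Bool) (j : ℕ) : (Fin d → ℝ) →L[ℝ] ℝ :=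
  LinearMap.toContinuousLinearMap
    { toFun := fun x => ∑ n ∈ (Finset.range d).erase j, linF d ε n x
      map_add' := fun x y => by
        rw [← Finset.sum_add_distrib]
        exact Finset.sum_congr rfl (fun n _ => linF_add d ε n x y)
      map_smul' := fun c x => by
        simp only [RingHom.id_apply, smul_eq_mul, Finset.mul_sum]
        exact Finset.sum_congr rfl (fun n _ => linF_smul d ε n c x) }

lemma Lf_apply (d : ℕ) (ε : ℕ → Bool) (j : ℕ) (x : Fin d → ℝ) :
    Lf d ε j x = ∑ n ∈ (Finset.range d).erase j, linF d ε n x := by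
  unfold Lf
  rw [LinearMap.coe_toContinuousLinearMap']
  rfl

lemma slack_nonneg {d : ℕ} (ε : ℕ → Bool) {x : Fin d → ℝ} (hx : x ∈ kleeMinty d)
    {n : ℕ} (hn : n < d) : 0 ≤ slackF d ε n x := by
  unfold slackF
  cases n with
  | zero =>
      have h0 := hx.1 hn
      rw [if_pos rfl]
      have hP : Pc d x 0 = x ⟨0, hn⟩ := by unfold Pc; rw [dif_pos hn]
      rw [hP]
      split <;> linarith [h0.1, h0.2]
  | succ m =>
      have hc := hx.2 m hn
      rw [if_neg (Nat.succ_ne_zero m)]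
      have hP1 : Pc d x (m+1) = x ⟨m+1, hn⟩ := by unfold Pc; rw [dif_pos hn]
      have hP0 : Pc d x m = x ⟨m, Nat.lt_of_succ_lt hn⟩ := by
        unfold Pc; rw [dif_pos (Nat.lt_of_succ_lt hn)]
      simp only [Nat.add_sub_cancel]
      rw [hP1, hP0]
      split <;> linarith [hc.1, hc.2]

lemma slack_vert {d : ℕ} (ε ζ : ℕ → Bool) {n : ℕ} (hn : n < d) (hnb : ζ n = ε n) :
    slackF d ε n (fun i : Fin d => val ζ i) = 0 := by
  unfold slackF Pc
  cases n with
  | zero =>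
      simp only [if_pos rfl, dif_pos hn]
      show (if ε 0 then 1 - val ζ 0 else val ζ 0) = 0
      simp only [val, hnb]
      split <;> simp_all
  | succ m =>
      simp only [if_neg (Nat.succ_ne_zero m), Nat.add_sub_cancel, dif_pos hn,
        dif_pos (Nat.lt_of_succ_lt hn)]
      show (if ε (m+1) then 1 - (1/3) * val ζ m - val ζ (m+1)
        else val ζ (m+1) - (1/3) * val ζ m) = 0
      simp only [val, hnb]
      rcases hb : ε (m+1) <;> simp only [hb, if_true, if_false, Bool.false_eq_true] <;> ring

lemma slack_affine (d : ℕ) (ε : ℕ → Bool) (n : ℕ) {u v : ℝ} (huv : u + v = 1)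
    (y z : Fin d → ℝ) :
    slackF d ε n (u • y + v • z) = u * slackF d ε n y + v * slackF d ε n z := by
  unfold slackF
  split_ifs <;> simp only [Pc_comb] <;> ring_nf <;>
    nlinarith [huv, sq_nonneg u]

lemma mem_segment_of_slacks {d : ℕ} {ε ε' : ℕ → Bool} {j : ℕ} (hj : j < d)
    (hdiff : ε' j = !ε j) (hagree : ∀ i, i ≠ j → ε' i = ε i)
    {x : Fin d → ℝ} (hxK : x ∈ kleeMinty d)
    (hsl : ∀ n ∈ (Finset.range d).erase j, slackF d ε n x = 0) :
    x ∈ segment ℝ (fun i : Fin d => val ε i) (fun i : Fin d => val ε' i) := by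
  have hsl0 : j ≠ 0 → ∀ h0 : 0 < d, x ⟨0, h0⟩ = val ε 0 := by
    intro hj0 h0
    have h := hsl 0 (Finset.mem_erase.mpr ⟨Ne.symm hj0, Finset.mem_range.mpr h0⟩)
    simp only [slackF, if_pos rfl, Pc, dif_pos h0] at h
    simp only [val]
    cases hb : ε 0 <;> rw [hb] at h <;> simp_all <;> linarith
  have hslS : ∀ m (hm : m+1 < d), m+1 ≠ j →
      x ⟨m+1, hm⟩ = (if ε (m+1) then 1 - (1/3) * x ⟨m, Nat.lt_of_succ_lt hm⟩
        else (1/3) * x ⟨m, Nat.lt_of_succ_lt hm⟩) := by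
    intro m hm hne
    have h := hsl (m+1) (Finset.mem_erase.mpr ⟨hne, Finset.mem_range.mpr hm⟩)
    simp only [slackF, if_neg (Nat.succ_ne_zero m), Nat.add_sub_cancel, Pc, dif_pos hm,
      dif_pos (Nat.lt_of_succ_lt hm)] at h
    cases hb : ε (m+1) <;>
      simp only [hb, if_true, Bool.false_eq_true, if_false] at h ⊢ <;> linarith
  have claim1 : ∀ i (h : i < d), i < j → x ⟨i, h⟩ = val ε i := by
    intro i
    induction i with
    | zero => intro h h0j; exact hsl0 (by omega) h
    | succ m ih =>
        intro h hmj
        have hx1 := hslS m h (by omega)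
        have hxm := ih (Nat.lt_of_succ_lt h) (by omega)
        rw [hxm] at hx1
        simp only [val]
        cases hb : ε (m+1) <;> rw [hb] at hx1 <;> simp_all <;> linarith
  have hvε' : ∀ i, i < j → val ε' i = val ε i := by
    intro i hi
    exact (val_congr i (fun m hm => (hagree m (by omega)).symm)).symm
  -- the free coordinate
  have hpb : 0 ≤ (if j = 0 then (0:ℝ) else val ε (j-1)) ∧
      (if j = 0 then (0:ℝ) else val ε (j-1)) ≤ 1 := by
    split
    · norm_num
    · exact val_bounds ε (j-1)
  set p : ℝ := if j = 0 then (0:ℝ) else val ε (j-1) with hp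
  have haj : val ε j = if ε j then 1 - (1/3)*p else (1/3)*p := by
    rw [hp]
    cases j with
    | zero => simp only [if_pos rfl, val]; cases ε 0 <;> norm_num
    | succ m =>
        simp only [if_neg (Nat.succ_ne_zero m), Nat.add_sub_cancel, val]
        cases ε (m+1) <;> simp <;> ring
  have hbj : val ε' j = if ε j then (1/3)*p else 1 - (1/3)*p := by
    rw [hp]
    cases j with
    | zero =>
        simp only [if_pos rfl, val, hdiff]
        cases ε 0 <;> norm_num
    | succ m =>
        simp only [if_neg (Nat.succ_ne_zero m), Nat.add_sub_cancel, val, hdiff]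
        rw [hvε' m (by omega)]
        cases ε (m+1) <;> simp <;> ring
  have hxj : (1/3)*p ≤ x ⟨j, hj⟩ ∧ x ⟨j, hj⟩ ≤ 1 - (1/3)*p := by
    rw [hp]
    cases j with
    | zero =>
        have h00 := hxK.1 hj
        rw [if_pos rfl]
        constructor <;> linarith [h00.1, h00.2]
    | succ m =>
        have hc := hxK.2 m hj
        have hxm : x ⟨m, Nat.lt_of_succ_lt hj⟩ = val ε m := claim1 m _ (by omega)
        simp only [if_neg (Nat.succ_ne_zero m), Nat.add_sub_cancel]
        rw [← hxm]
        exact hc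
  have hden : (if ε j then ((1/3)*p - (1 - (1/3)*p)) else (1 - (1/3)*p - (1/3)*p)) ≠ 0 := by
    split <;> [nlinarith [hpb.1, hpb.2]; nlinarith [hpb.1, hpb.2]]
  have hden' : val ε' j - val ε j ≠ 0 := by
    rw [haj, hbj]
    cases hb : ε j <;> simp only [hb, if_true, Bool.false_eq_true, if_false] <;>
      intro hcon <;> nlinarith [hpb.1, hpb.2]
  set t : ℝ := (x ⟨j, hj⟩ - val ε j) / (val ε' j - val ε j) with ht
  have hx_eq : x ⟨j, hj⟩ = (1-t) * val ε j + t * val ε' j := by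
    rw [ht]
    field_simp
    ring
  have ht0 : 0 ≤ t := by
    rw [ht]
    cases hb : ε j
    · apply div_nonneg
      · rw [haj, hb]; simp only [Bool.false_eq_true, if_false]; linarith [hxj.1]
      · rw [haj, hbj, hb]; simp only [Bool.false_eq_true, if_false]
        nlinarith [hpb.1, hpb.2]
    · apply div_nonneg_of_nonpos
      · rw [haj, hb]; simp only [if_true]; linarith [hxj.2]
      · rw [haj, hbj, hb]; simp only [if_true]
        nlinarith [hpb.1, hpb.2]
  have ht1 : t ≤ 1 := by
    have h1t : 1 - t = (val ε' j - x ⟨j, hj⟩) / (val ε' j - val ε j) := by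
      rw [ht]; field_simp; ring
    have : 0 ≤ 1 - t := by
      rw [h1t]
      cases hb : ε j
      · apply div_nonneg
        · rw [hbj, hb]; simp only [Bool.false_eq_true, if_false]; linarith [hxj.2]
        · rw [haj, hbj, hb]; simp only [Bool.false_eq_true, if_false]
          nlinarith [hpb.1, hpb.2]
      · apply div_nonneg_of_nonpos
        · rw [hbj, hb]; simp only [if_true]; linarith [hxj.1]
        · rw [haj, hbj, hb]; simp only [if_true]
          nlinarith [hpb.1, hpb.2]
    linarith
  have claim2 : ∀ i (h : i < d), x ⟨i, h⟩ = (1-t) * val ε i + t * val ε' i := by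
    intro i
    induction i with
    | zero =>
        intro h
        rcases Nat.eq_zero_or_pos j with hj0 | hj0
        · subst hj0
          exact hx_eq
        · rw [claim1 0 h hj0, hvε' 0 hj0]; ring
    | succ m ih =>
        intro h
        rcases lt_trichotomy (m+1) j with hlt | heq | hgt
        · rw [claim1 _ h hlt, hvε' _ hlt]; ring
        · subst heq
          exact hx_eq
        · have hxm := ih (Nat.lt_of_succ_lt h)
          have heq1 := hslS m h (by omega)
          have hεm1 : ε' (m+1) = ε (m+1) := hagree (m+1) (by omega)
          show x ⟨m+1, h⟩ = (1-t) * val ε (m+1) + t * val ε' (m+1)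
          simp only [val, hεm1]
          cases hb : ε (m+1) <;> rw [hb] at heq1 <;>
            simp only [if_true, Bool.false_eq_true, if_false] at heq1 ⊢ <;>
            rw [heq1, hxm] <;> ring
  refine ⟨1-t, t, by linarith, ht0, by ring, ?_⟩
  funext i
  have := (claim2 i.1 i.2).symm
  simp only [Pi.add_apply, Pi.smul_apply, smul_eq_mul]
  simpa using this

lemma segment_exposed {d : ℕ} {ε ε' : ℕ → Bool} {j : ℕ} (hj : j < d)
    (hdiff : ε' j = !ε j) (hagree : ∀ i, i ≠ j → ε' i = ε i) :
    IsExposed ℝ (kleeMinty d)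
      (segment ℝ (fun i : Fin d => val ε i) (fun i : Fin d => val ε' i)) := by
  intro _
  refine ⟨Lf d ε j, ?_⟩
  set A : Fin d → ℝ := fun i : Fin d => val ε i with hA
  set Bv : Fin d → ℝ := fun i : Fin d => val ε' i with hB
  have hmemE : ∀ n, n ∈ (Finset.range d).erase j ↔ (n ≠ j ∧ n < d) := by
    intro n; rw [Finset.mem_erase, Finset.mem_range]
  have hSnonneg : ∀ y ∈ kleeMinty d, ∀ n ∈ (Finset.range d).erase j, 0 ≤ slackF d ε n y :=
    fun y hy n hn => slack_nonneg ε hy ((hmemE n).mp hn).2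
  have hSA : ∀ n ∈ (Finset.range d).erase j, slackF d ε n A = 0 := fun n hn =>
    slack_vert ε ε ((hmemE n).mp hn).2 rfl
  have hSB : ∀ n ∈ (Finset.range d).erase j, slackF d ε n Bv = 0 := fun n hn =>
    slack_vert ε ε' ((hmemE n).mp hn).2 (hagree n ((hmemE n).mp hn).1)
  have hdecomp : ∀ y : Fin d → ℝ, ∑ n ∈ (Finset.range d).erase j, slackF d ε n y
      = (∑ n ∈ (Finset.range d).erase j, cstF ε n) - Lf d ε j y := by
    intro y
    rw [Lf_apply, ← Finset.sum_sub_distrib]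
    exact Finset.sum_congr rfl fun n _ => slack_decomp d ε n y
  have hAK : A ∈ kleeMinty d := vert_mem ε
  have hBK : Bv ∈ kleeMinty d := vert_mem ε'
  have hLA : Lf d ε j A = ∑ n ∈ (Finset.range d).erase j, cstF ε n := by
    have h := hdecomp A
    rw [Finset.sum_eq_zero hSA] at h
    linarith
  ext x
  simp only [Set.mem_sep_iff]
  constructor
  · intro hseg
    have hxK : x ∈ kleeMinty d := (km_convex d).segment_subset hAK hBK hseg
    refine ⟨hxK, ?_⟩
    intro y hy
    obtain ⟨u, v, hu, hv, huv, hxx⟩ := hseg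
    have hSx : ∑ n ∈ (Finset.range d).erase j, slackF d ε n x = 0 := by
      apply Finset.sum_eq_zero
      intro n hn
      rw [← hxx, slack_affine d ε n huv, hSA n hn, hSB n hn]
      ring
    have hSy : 0 ≤ ∑ n ∈ (Finset.range d).erase j, slackF d ε n y :=
      Finset.sum_nonneg (hSnonneg y hy)
    have h1 := hdecomp x
    have h2 := hdecomp y
    rw [hSx] at h1
    linarith
  · rintro ⟨hxK, hmax⟩
    have hLx := hmax A hAK
    have h1 := hdecomp x
    have hSx0 : ∑ n ∈ (Finset.range d).erase j, slackF d ε n x = 0 :=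
      le_antisymm (by linarith) (Finset.sum_nonneg (hSnonneg x hxK))
    have hslacks := (Finset.sum_eq_zero_iff_of_nonneg (hSnonneg x hxK)).mp hSx0
    exact mem_segment_of_slacks hj hdiff hagree hxK hslacks

end KMaux

/-- The Klee–Minty cube in dimension `d` has exactly `2^d` vertices, and it
admits a strictly ascending path (with respect to the objective `x ↦ x_d`,
consecutive vertices joined by edges of the polytope) visiting all `2^d`
vertices. -/
theorem kleeMinty_ascending_path {d : ℕ} (hd : 0 < d) :
    ((kleeMinty d).extremePoints ℝ).ncard = 2 ^ d ∧
    ∃ v : ℕ → (Fin d → ℝ),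
      (Set.range fun k : Fin (2 ^ d) => v (k : ℕ)) =
          (kleeMinty d).extremePoints ℝ ∧
      (∀ k l : ℕ, k < l → l < 2 ^ d → v k ≠ v l) ∧
      ∀ k : ℕ, k + 1 < 2 ^ d →
        IsExposed ℝ (kleeMinty d) (segment ℝ (v k) (v (k + 1))) ∧
        v k ⟨d - 1, Nat.sub_lt hd one_pos⟩ <
          v (k + 1) ⟨d - 1, Nat.sub_lt hd one_pos⟩ := by
  open KMaux in
  refine ⟨ncard_extreme d, ?_⟩
  refine ⟨fun k => fun i : Fin d => KMaux.val (KMaux.gb k) i, ?_, ?_, ?_⟩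
  · -- range equality
    have hsub : (Set.range fun k : Fin (2 ^ d) =>
        (fun i : Fin d => KMaux.val (KMaux.gb (k : ℕ)) i)) ⊆ (kleeMinty d).extremePoints ℝ := by
      rintro y ⟨k, rfl⟩
      exact KMaux.vert_extreme (KMaux.gb (k : ℕ))
    have hinj : Function.Injective (fun k : Fin (2 ^ d) =>
        (fun i : Fin d => KMaux.val (KMaux.gb (k : ℕ)) i)) := by
      intro k l heq
      by_contra hne
      have hor : (k : ℕ) < l ∨ (l : ℕ) < k := by
        rcases lt_trichotomy (k : ℕ) (l : ℕ) with h | h | h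
        · exact Or.inl h
        · exact absurd (Fin.ext h) hne
        · exact Or.inr h
      rcases hor with h | h
      · have := KMaux.val_mono d k l h l.2
        have heq' := congrFun heq ⟨d - 1, Nat.sub_lt hd one_pos⟩
        simp only at heq'
        rw [heq'] at this
        exact lt_irrefl _ this
      · have := KMaux.val_mono d l k h k.2
        have heq' := congrFun heq ⟨d - 1, Nat.sub_lt hd one_pos⟩
        simp only at heq'
        rw [heq'] at this
        exact lt_irrefl _ this
    have hcard : (Set.range fun k : Fin (2 ^ d) =>
        (fun i : Fin d => KMaux.val (KMaux.gb (k : ℕ)) i)).ncard = 2 ^ d := by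
      rw [← Set.image_univ, Set.ncard_image_of_injective _ hinj, Set.ncard_univ,
        Nat.card_eq_fintype_card, Fintype.card_fin]
    have hfin : ((kleeMinty d).extremePoints ℝ).Finite := by
      rw [KMaux.extreme_eq_range d]
      exact Set.finite_range _
    exact Set.eq_of_subset_of_ncard_le hsub
      (le_of_eq (by rw [hcard, KMaux.ncard_extreme d])) hfin
  · -- distinctness
    intro k l hkl hl heq
    have := KMaux.val_mono d k l hkl hl
    have heq' := congrFun heq ⟨d - 1, Nat.sub_lt hd one_pos⟩
    simp only at heq'
    rw [heq'] at this
    exact lt_irrefl _ this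
  · -- edges
    intro k hk
    constructor
    · obtain ⟨j, hjd, hdiffb, hagr⟩ := KMaux.gb_succ hk
      have hdiff' : KMaux.gb (k+1) j = !(KMaux.gb k j) := by
        cases h1 : KMaux.gb k j <;> cases h2 : KMaux.gb (k+1) j <;> simp_all
      exact KMaux.segment_exposed hjd hdiff' hagr
    · exact KMaux.val_mono d k (k+1) (Nat.lt_succ_self k) hk
end

section
/- The Klee–Minty polytope in dimension d is combinatorially isomorphic to the d-cube; in particular, its vertices are in bijection with {0,1}^d, where the vertex corresponding to ε ∈ {0,1}^d is determined by choosing, for each i, equality in the lower bound (εᵢ = 0) or the upper bound (εᵢ = 1) of the i-th pair of inequalities. -/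
open Set Finset

namespace KM

/-- Extended coordinate sequence: `Y d x 0 = 0`, `Y d x (n+1) = x n` (or `0` out of range). -/
def Y (d : ℕ) (x : Fin d → ℝ) : ℕ → ℝ
  | 0 => 0
  | n+1 => if h : n < d then x ⟨n, h⟩ else 0

@[simp] lemma Y_zero (d : ℕ) (x : Fin d → ℝ) : Y d x 0 = 0 := rfl

lemma Y_succ (d : ℕ) (x : Fin d → ℝ) (n : ℕ) (h : n < d) : Y d x (n+1) = x ⟨n, h⟩ := by
  simp [Y, h]

lemma Y_succ_ge (d : ℕ) (x : Fin d → ℝ) (n : ℕ) (h : ¬ n < d) : Y d x (n+1) = 0 := by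
  simp [Y, h]

/-- The generalized Klee–Minty body with parameter `c`. -/
def P (c : ℝ) (d : ℕ) : Set (Fin d → ℝ) :=
  {x | ∀ n < d, c * Y d x n ≤ Y d x (n+1) ∧ Y d x (n+1) ≤ 1 - c * Y d x n}

/-- The chosen bound. -/
def bd (c t : ℝ) (b : Bool) : ℝ := if b then 1 - c * t else c * t

@[simp] lemma bd_true (c t : ℝ) : bd c t true = 1 - c * t := rfl
@[simp] lemma bd_false (c t : ℝ) : bd c t false = c * t := rfl

/-- The face of `P c d` given by a tightness pattern. -/
def F (c : ℝ) (d : ℕ) (σ : Fin d → Option Bool) : Set (Fin d → ℝ) :=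
  {x | x ∈ P c d ∧ ∀ (i : Fin d) (b : Bool), σ i = some b → Y d x (i.1+1) = bd c (Y d x i.1) b}

lemma bounds_aux {c : ℝ} (hc0 : 0 ≤ c) (hc : c < 1/2) {t : ℝ} (ht0 : 0 ≤ t) (ht1 : t ≤ 1) :
    0 ≤ c * t ∧ c * t ≤ 1/2 ∧ 1/2 ≤ 1 - c * t ∧ 1 - c * t ≤ 1 ∧ c * t ≤ c := by
  have h1 : c * t ≤ c * 1 := by nlinarith
  have h0 : 0 ≤ c * t := mul_nonneg hc0 ht0
  constructor; · exact h0
  constructor; · nlinarith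
  constructor; · nlinarith
  constructor; · nlinarith
  · nlinarith

/-- Points of `P` have all coordinates in `[0,1]`; prefix version. -/
lemma prefix_bound {c : ℝ} (hc0 : 0 ≤ c) (hc : c < 1/2) (y : ℕ → ℝ) (hy0 : y 0 = 0)
    (n : ℕ) (h : ∀ i < n, c * y i ≤ y (i+1) ∧ y (i+1) ≤ 1 - c * y i) :
    0 ≤ y n ∧ y n ≤ 1 := by
  induction n with
  | zero => simp [hy0]
  | succ m ih =>
    have hm := ih (fun i hi => h i (Nat.lt_succ_of_lt hi))
    have hh := h m (Nat.lt_succ_self m)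
    obtain ⟨h0, h1, h2, h3, h4⟩ := bounds_aux hc0 hc hm.1 hm.2
    exact ⟨le_trans h0 hh.1, le_trans hh.2 h3⟩

lemma mem_P_bound {c : ℝ} (hc0 : 0 ≤ c) (hc : c < 1/2) {d : ℕ} {x : Fin d → ℝ}
    (hx : x ∈ P c d) (n : ℕ) (hn : n ≤ d) : 0 ≤ Y d x n ∧ Y d x n ≤ 1 := by
  refine prefix_bound hc0 hc (Y d x) rfl n (fun i hi => hx i (lt_of_lt_of_le hi hn))


/-- canonical point of the face `F c d σ`, as a sequence. -/
noncomputable def z (c : ℝ) (d : ℕ) (σ : Fin d → Option Bool) : ℕ → ℝ :=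
  fun n => Nat.rec 0 (fun m zm => if h : m < d then
    (match σ ⟨m, h⟩ with
      | some b => bd c zm b
      | none => 1/2) else 0) n

@[simp] lemma z_zero (c d σ) : z c d σ 0 = 0 := rfl

lemma z_succ (c : ℝ) (d : ℕ) (σ : Fin d → Option Bool) (n : ℕ) (h : n < d) :
    z c d σ (n+1) = (match σ ⟨n, h⟩ with
      | some b => bd c (z c d σ n) b
      | none => 1/2) := by
  simp only [z]; rw [dif_pos h]

lemma z_succ_ge (c : ℝ) (d : ℕ) (σ : Fin d → Option Bool) (n : ℕ) (h : ¬ n < d) :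
    z c d σ (n+1) = 0 := by
  simp only [z]; rw [dif_neg h]

/-- canonical point as a point. -/
noncomputable def xpt (c : ℝ) (d : ℕ) (σ : Fin d → Option Bool) : Fin d → ℝ :=
  fun i => z c d σ (i.1+1)

lemma Y_xpt (c : ℝ) (d : ℕ) (σ : Fin d → Option Bool) (n : ℕ) :
    Y d (xpt c d σ) n = z c d σ n := by
  cases n with
  | zero => rfl
  | succ m =>
    by_cases h : m < d
    · simp [Y, h, xpt]
    · simp [Y, h, z_succ_ge c d σ m h]


section
variable {c : ℝ} {d : ℕ}

lemma bd_mem {hc0 : 0 ≤ c} (hc : c < 1/2) {t : ℝ} (ht0 : 0 ≤ t) (ht1 : t ≤ 1) (b : Bool) :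
    0 ≤ bd c t b ∧ bd c t b ≤ 1 := by
  obtain ⟨h0, h1, h2, h3, h4⟩ := bounds_aux hc0 hc ht0 ht1
  cases b <;> simp [bd] <;> constructor <;> linarith

lemma z_succ_some (σ : Fin d → Option Bool) (n : ℕ) (h : n < d) (b : Bool)
    (hb : σ ⟨n, h⟩ = some b) : z c d σ (n+1) = bd c (z c d σ n) b := by
  rw [z_succ c d σ n h, hb]

lemma z_succ_none (σ : Fin d → Option Bool) (n : ℕ) (h : n < d)
    (hb : σ ⟨n, h⟩ = none) : z c d σ (n+1) = 1/2 := by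
  rw [z_succ c d σ n h, hb]

lemma z_bound (hc0 : 0 ≤ c) (hc : c < 1/2) (σ : Fin d → Option Bool) (n : ℕ) :
    0 ≤ z c d σ n ∧ z c d σ n ≤ 1 := by
  induction n with
  | zero => simp
  | succ m ih =>
    by_cases h : m < d
    · rcases hσ : σ ⟨m, h⟩ with _ | b
      · rw [z_succ_none σ m h hσ]; norm_num
      · rw [z_succ_some σ m h b hσ]
        exact bd_mem (hc0 := hc0) hc ih.1 ih.2 b
    · rw [z_succ_ge c d σ m h]; norm_num

lemma z_constraint (hc0 : 0 ≤ c) (hc : c < 1/2) (σ : Fin d → Option Bool) (n : ℕ) (h : n < d) :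
    c * z c d σ n ≤ z c d σ (n+1) ∧ z c d σ (n+1) ≤ 1 - c * z c d σ n := by
  obtain ⟨hz0, hz1⟩ := z_bound hc0 hc σ n
  obtain ⟨h0, h1, h2, h3, h4⟩ := bounds_aux hc0 hc hz0 hz1
  rcases hσ : σ ⟨n, h⟩ with _ | b
  · rw [z_succ_none σ n h hσ]; exact ⟨h1, h2⟩
  · rw [z_succ_some σ n h b hσ]
    cases b
    · exact ⟨le_refl _, by simp only [bd, if_neg]; simp; linarith⟩
    · exact ⟨by simp only [bd]; simp; linarith, le_refl _⟩

lemma xpt_mem_P (hc0 : 0 ≤ c) (hc : c < 1/2) (σ : Fin d → Option Bool) :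
    xpt c d σ ∈ P c d := by
  intro n hn
  rw [Y_xpt, Y_xpt]
  exact z_constraint hc0 hc σ n hn

lemma xpt_mem_F (hc0 : 0 ≤ c) (hc : c < 1/2) (σ : Fin d → Option Bool) :
    xpt c d σ ∈ F c d σ := by
  refine ⟨xpt_mem_P hc0 hc σ, fun i b hb => ?_⟩
  rw [Y_xpt, Y_xpt]
  exact z_succ_some σ i.1 i.2 b (by rwa [Fin.eta])

/-- at a free index, the canonical point is strictly inside;
at a tight index the value determines the side. -/
lemma xpt_free_strict (hc0 : 0 ≤ c) (hc : c < 1/2) (σ : Fin d → Option Bool) (i : Fin d)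
    (hσ : σ i = none) (b : Bool) :
    z c d σ (i.1+1) ≠ bd c (z c d σ i.1) b := by
  obtain ⟨hz0, hz1⟩ := z_bound hc0 hc σ i.1
  obtain ⟨h0, h1, h2, h3, h4⟩ := bounds_aux hc0 hc hz0 hz1
  rw [z_succ_none σ i.1 i.2 (by rwa [Fin.eta])]
  cases b <;> simp only [bd, if_true, if_false] <;> intro hcontra <;> simp at hcontra <;> nlinarith

lemma bd_ne (hc0 : 0 ≤ c) (hc : c < 1/2) {t : ℝ} (ht0 : 0 ≤ t) (ht1 : t ≤ 1) :
    bd c t true ≠ bd c t false := by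
  obtain ⟨h0, h1, h2, h3, h4⟩ := bounds_aux hc0 hc ht0 ht1
  simp [bd]; intro hcontra; nlinarith

def patLE {d : ℕ} (σ τ : Fin d → Option Bool) : Prop :=
  ∀ (i : Fin d) (b : Bool), τ i = some b → σ i = some b

lemma F_mono (σ τ : Fin d → Option Bool) (h : patLE σ τ) : F c d σ ⊆ F c d τ :=
  fun x hx => ⟨hx.1, fun i b hb => hx.2 i b (h i b hb)⟩

lemma F_subset_patLE (hc0 : 0 ≤ c) (hc : c < 1/2) (σ τ : Fin d → Option Bool)
    (h : F c d σ ⊆ F c d τ) : patLE σ τ := by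
  intro i b hb
  have hx := h (xpt_mem_F hc0 hc σ)
  have := hx.2 i b hb
  rw [Y_xpt, Y_xpt] at this
  rcases hσ : σ i with _ | b'
  · exact absurd this (xpt_free_strict hc0 hc σ i hσ b)
  · -- tight with b'; show b' = b
    rcases Bool.eq_or_eq_not b' b with rfl | rfl
    · rfl
    · exfalso
      have hx2 := (xpt_mem_F hc0 hc σ).2 i (!b) hσ
      rw [Y_xpt, Y_xpt] at hx2
      obtain ⟨hz0, hz1⟩ := z_bound hc0 hc σ i.1
      have hne := bd_ne hc0 hc hz0 hz1
      cases b
      · simp at hx2 this; rw [this] at hx2; exact hne hx2.symm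
      · simp at hx2 this; rw [this] at hx2; exact hne hx2

lemma F_subset_iff (hc0 : 0 ≤ c) (hc : c < 1/2) (σ τ : Fin d → Option Bool) :
    F c d σ ⊆ F c d τ ↔ patLE σ τ :=
  ⟨F_subset_patLE hc0 hc σ τ, F_mono σ τ⟩

lemma patLE_antisymm {σ τ : Fin d → Option Bool} (h1 : patLE σ τ) (h2 : patLE τ σ) : σ = τ := by
  funext i
  rcases hσ : σ i with _ | b <;> rcases hτ : τ i with _ | b'
  · rfl
  · rw [h1 i b' hτ] at hσ; exact hσ.symm ▸ hσ
  · rw [h2 i b hσ] at hτ; exact absurd hτ (by simp)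
  · rw [h2 i b hσ] at hτ; rw [← hτ]

lemma F_inj (hc0 : 0 ≤ c) (hc : c < 1/2) {σ τ : Fin d → Option Bool}
    (h : F c d σ = F c d τ) : σ = τ :=
  patLE_antisymm (F_subset_patLE hc0 hc σ τ h.le) (F_subset_patLE hc0 hc τ σ h.ge)

end


noncomputable def lin (d : ℕ) (μ : Fin d → ℝ) : (Fin d → ℝ) →L[ℝ] ℝ :=
  ∑ i : Fin d, μ i • ContinuousLinearMap.proj i

lemma lin_apply (d : ℕ) (μ : Fin d → ℝ) (x : Fin d → ℝ) :
    lin d μ x = ∑ i : Fin d, μ i * x i := by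
  simp [lin, ContinuousLinearMap.sum_apply]

lemma clm_eq_lin (d : ℕ) (l : (Fin d → ℝ) →L[ℝ] ℝ) :
    ∀ x, l x = lin d (fun i => l (Pi.single i 1)) x := by
  intro x
  have hx : x = ∑ i : Fin d, x i • (Pi.single i (1:ℝ) : Fin d → ℝ) := by
    ext j; rw [Finset.sum_apply]; simp [Pi.single_apply]
  conv_lhs => rw [hx]
  rw [map_sum, lin_apply]
  congr 1; funext i; simp [mul_comm]

/-- pattern as a function on `ℕ`. -/
def pat' (d : ℕ) (σ : Fin d → Option Bool) : ℕ → Option Bool :=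
  fun n => if h : n < d then σ ⟨n, h⟩ else none

lemma pat'_lt {d : ℕ} (σ : Fin d → Option Bool) {n : ℕ} (h : n < d) :
    pat' d σ n = σ ⟨n, h⟩ := dif_pos h

/-- signed weight. -/
def rho (d : ℕ) (σ : Fin d → Option Bool) (lam : ℕ → ℝ) : ℕ → ℝ :=
  fun n => if pat' d σ n = some true then lam n
    else if pat' d σ n = some false then -lam n else 0

/-- weighted right-hand side. -/
def beta (d : ℕ) (σ : Fin d → Option Bool) (lam : ℕ → ℝ) : ℕ → ℝ :=
  fun n => if pat' d σ n = some true then lam n else 0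

section Key

variable {c : ℝ} {d : ℕ} {σ : Fin d → Option Bool} {lam : ℕ → ℝ}

lemma term_le (hc0 : 0 ≤ c)
    (hlam0 : ∀ n, 0 ≤ lam n)
    (hfree : ∀ n (h : n < d), σ ⟨n, h⟩ = none → lam n = 0)
    {x : Fin d → ℝ} (hx : x ∈ P c d) {n : ℕ} (hn : n < d) :
    rho d σ lam n * Y d x (n+1) + c * lam n * Y d x n ≤ beta d σ lam n := by
  obtain ⟨hu, hv⟩ := hx n hn
  have hl0 := hlam0 n
  rcases hσ : σ ⟨n, hn⟩ with _ | b
  · rw [rho, beta, pat'_lt σ hn, hσ, hfree n hn hσ]; norm_num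
  · cases b
    · rw [rho, beta, pat'_lt σ hn, hσ]; norm_num; nlinarith
    · rw [rho, beta, pat'_lt σ hn, hσ]; norm_num; nlinarith

lemma term_eq_iff (hc0 : 0 ≤ c)
    (hlam0 : ∀ n, 0 ≤ lam n)
    (hfree : ∀ n (h : n < d), σ ⟨n, h⟩ = none → lam n = 0)
    (hpos : ∀ n (h : n < d), σ ⟨n, h⟩ ≠ none → 0 < lam n)
    {x : Fin d → ℝ} (hx : x ∈ P c d) {n : ℕ} (hn : n < d) :
    rho d σ lam n * Y d x (n+1) + c * lam n * Y d x n = beta d σ lam n ↔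
      ∀ b, σ ⟨n, hn⟩ = some b → Y d x (n+1) = bd c (Y d x n) b := by
  rcases hσ : σ ⟨n, hn⟩ with _ | b
  · rw [rho, beta, pat'_lt σ hn, hσ, hfree n hn hσ]
    norm_num
    exact ⟨by simp, by simp⟩
  · have hl : 0 < lam n := hpos n hn (by simp [hσ])
    cases b
    · rw [rho, beta, pat'_lt σ hn, hσ]
      norm_num [bd]
      constructor
      · intro h; nlinarith
      · intro h; rw [h]; ring
    · rw [rho, beta, pat'_lt σ hn, hσ]
      norm_num [bd]
      constructor
      · intro h; nlinarith
      · intro h; rw [h]; ring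

lemma sum_shift (hlamd : lam d = 0) (x : Fin d → ℝ) :
    ∑ n ∈ Finset.range d, c * lam (n+1) * Y d x (n+1)
      = ∑ n ∈ Finset.range d, c * lam n * Y d x n := by
  have h0 : c * lam 0 * Y d x 0 = 0 := by simp
  have hd : c * lam d * Y d x d = 0 := by rw [hlamd]; ring
  have := Finset.sum_range_succ' (fun n => c * lam n * Y d x n) d
  rw [Finset.sum_range_succ (fun n => c * lam n * Y d x n) d] at this
  -- this : ∑_{range d} f + f d = ∑_{range d} f (n+1) + f 0
  linarith [this.symm]

lemma lin_eq_sum (μ : Fin d → ℝ) (x : Fin d → ℝ) :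
    lin d μ x = ∑ n ∈ Finset.range d,
      (if h : n < d then μ ⟨n, h⟩ else 0) * Y d x (n+1) := by
  rw [lin_apply,
    ← Fin.sum_univ_eq_sum_range (fun n => (if h : n < d then μ ⟨n, h⟩ else 0) * Y d x (n+1)) d]
  apply Finset.sum_congr rfl
  intro i _
  rw [dif_pos i.isLt, Y_succ d x i.1 i.isLt, Fin.eta]

end Key


section Main

variable {c : ℝ} {d : ℕ} {σ : Fin d → Option Bool} {lam : ℕ → ℝ} {μ : Fin d → ℝ}

lemma lin_eq_terms
    (hlamd : lam d = 0)
    (hμ : ∀ i : Fin d, μ i = rho d σ lam i.1 + c * lam (i.1+1))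
    (x : Fin d → ℝ) :
    lin d μ x = ∑ n ∈ Finset.range d,
      (rho d σ lam n * Y d x (n+1) + c * lam n * Y d x n) := by
  rw [lin_eq_sum μ x]
  have step : ∀ n ∈ Finset.range d,
      (if h : n < d then μ ⟨n, h⟩ else 0) * Y d x (n+1)
        = rho d σ lam n * Y d x (n+1) + c * lam (n+1) * Y d x (n+1) := by
    intro n hn
    rw [Finset.mem_range] at hn
    rw [dif_pos hn, hμ ⟨n, hn⟩]
    ring
  rw [Finset.sum_congr rfl step, Finset.sum_add_distrib, sum_shift hlamd x,
    ← Finset.sum_add_distrib]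

lemma le_B (hc0 : 0 ≤ c)
    (hlam0 : ∀ n, 0 ≤ lam n) (hlamd : lam d = 0)
    (hfree : ∀ n (h : n < d), σ ⟨n, h⟩ = none → lam n = 0)
    (hμ : ∀ i : Fin d, μ i = rho d σ lam i.1 + c * lam (i.1+1))
    {x : Fin d → ℝ} (hx : x ∈ P c d) :
    lin d μ x ≤ ∑ n ∈ Finset.range d, beta d σ lam n := by
  rw [lin_eq_terms hlamd hμ x]
  refine Finset.sum_le_sum (fun n hn => ?_)
  exact term_le hc0 hlam0 hfree hx (Finset.mem_range.1 hn)

lemma eq_B_iff (hc0 : 0 ≤ c)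
    (hlam0 : ∀ n, 0 ≤ lam n) (hlamd : lam d = 0)
    (hfree : ∀ n (h : n < d), σ ⟨n, h⟩ = none → lam n = 0)
    (hpos : ∀ n (h : n < d), σ ⟨n, h⟩ ≠ none → 0 < lam n)
    (hμ : ∀ i : Fin d, μ i = rho d σ lam i.1 + c * lam (i.1+1))
    {x : Fin d → ℝ} (hx : x ∈ P c d) :
    lin d μ x = (∑ n ∈ Finset.range d, beta d σ lam n) ↔ x ∈ F c d σ := by
  rw [lin_eq_terms hlamd hμ x]
  rw [Finset.sum_eq_sum_iff_of_le
    (fun n hn => term_le hc0 hlam0 hfree hx (Finset.mem_range.1 hn))]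
  constructor
  · intro h
    refine ⟨hx, fun i b hb => ?_⟩
    have := (term_eq_iff hc0 hlam0 hfree hpos hx i.isLt).1
      (h i.1 (Finset.mem_range.2 i.isLt)) b (by rwa [Fin.eta])
    exact this
  · intro hF n hn
    rw [Finset.mem_range] at hn
    refine (term_eq_iff hc0 hlam0 hfree hpos hx hn).2 ?_
    intro b hb
    exact hF.2 ⟨n, hn⟩ b hb

lemma argmax_eq (hc0 : 0 ≤ c) (hc : c < 1/2)
    (hlam0 : ∀ n, 0 ≤ lam n) (hlamd : lam d = 0)
    (hfree : ∀ n (h : n < d), σ ⟨n, h⟩ = none → lam n = 0)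
    (hpos : ∀ n (h : n < d), σ ⟨n, h⟩ ≠ none → 0 < lam n)
    (hμ : ∀ i : Fin d, μ i = rho d σ lam i.1 + c * lam (i.1+1)) :
    {x ∈ P c d | ∀ y ∈ P c d, lin d μ y ≤ lin d μ x} = F c d σ := by
  have hxpt := xpt_mem_F hc0 hc σ
  have hBmax : lin d μ (xpt c d σ) = ∑ n ∈ Finset.range d, beta d σ lam n :=
    (eq_B_iff hc0 hlam0 hlamd hfree hpos hμ hxpt.1).2 hxpt
  ext x
  constructor
  · rintro ⟨hxP, hmax⟩
    refine (eq_B_iff hc0 hlam0 hlamd hfree hpos hμ hxP).1 (le_antisymm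
      (le_B hc0 hlam0 hlamd hfree hμ hxP) ?_)
    rw [← hBmax]
    exact hmax _ hxpt.1
  · intro hF
    refine ⟨hF.1, fun y hy => ?_⟩
    rw [(eq_B_iff hc0 hlam0 hlamd hfree hpos hμ hF.1).2 hF]
    exact le_B hc0 hlam0 hlamd hfree hμ hy

end Main


section Exposed

variable {c : ℝ} {d : ℕ}

lemma F_isExposed (hc0 : 0 ≤ c) (hc : c < 1/2) (σ : Fin d → Option Bool) :
    IsExposed ℝ (P c d) (F c d σ) := by
  intro _
  classical
  set lam : ℕ → ℝ := fun n => if pat' d σ n = none then 0 else 1 with hlam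
  have hlam0 : ∀ n, 0 ≤ lam n := by intro n; by_cases h : pat' d σ n = none <;> simp [hlam, h]
  have hlamd : lam d = 0 := by simp [hlam, pat', lt_irrefl]
  have hfree : ∀ n (h : n < d), σ ⟨n, h⟩ = none → lam n = 0 := by
    intro n h hn; simp [hlam, pat'_lt σ h, hn]
  have hpos : ∀ n (h : n < d), σ ⟨n, h⟩ ≠ none → 0 < lam n := by
    intro n h hn; simp [hlam, pat'_lt σ h, hn]
  refine ⟨lin d (fun i => rho d σ lam i.1 + c * lam (i.1+1)), ?_⟩
  exact (argmax_eq hc0 hc hlam0 hlamd hfree hpos (fun i => rfl)).symm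

/-- backward recursion computing effective coefficients. -/
noncomputable def G (c : ℝ) (d : ℕ) (μ' : ℕ → ℝ) : ℕ → ℝ :=
  fun k => Nat.rec 0 (fun k Gk => μ' (d - (k+1)) - c * |Gk|) k

lemma exposed_classify (hc0 : 0 ≤ c) (hc : c < 1/2) {B : Set (Fin d → ℝ)}
    (hB : IsExposed ℝ (P c d) B) : B = ∅ ∨ ∃ σ, B = F c d σ := by
  rcases B.eq_empty_or_nonempty with h | h
  · exact Or.inl h
  obtain ⟨l, hl⟩ := hB h
  classical
  set μ0 : Fin d → ℝ := fun i => l (Pi.single i 1) with hμ0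
  set μ' : ℕ → ℝ := fun n => if h : n < d then μ0 ⟨n, h⟩ else 0 with hμ'
  set g : ℕ → ℝ := fun n => G c d μ' (d - n) with hg
  set lam : ℕ → ℝ := fun n => |g n| with hlamdef
  have hgd : g d = 0 := by simp [hg, G]
  have hgrec : ∀ n, n < d → g n = μ' n - c * |g (n+1)| := by
    intro n hn
    have h1 : d - n = (d - (n+1)) + 1 := by omega
    have h2 : d - ((d - (n+1)) + 1) = n := by omega
    simp only [hg, h1]
    show Nat.rec (motive := fun _ => ℝ) 0 (fun k Gk => μ' (d - (k+1)) - c * |Gk|) ((d - (n+1)) + 1)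
      = μ' n - c * |G c d μ' (d - (n+1))|
    simp only [h2]
    rfl
  set σ : Fin d → Option Bool := fun i =>
    if 0 < g i.1 then some true else if g i.1 < 0 then some false else none with hσ
  have hlam0 : ∀ n, 0 ≤ lam n := fun n => abs_nonneg _
  have hlamd : lam d = 0 := by simp [hlamdef, hgd]
  have hfree : ∀ n (h : n < d), σ ⟨n, h⟩ = none → lam n = 0 := by
    intro n h hn
    simp only [hσ] at hn
    by_cases h1 : 0 < g n
    · simp [h1] at hn
    · by_cases h2 : g n < 0
      · simp [h1, h2] at hn
      · have : g n = 0 := le_antisymm (not_lt.1 h1) (not_lt.1 h2)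
        simp [hlamdef, this]
  have hpos : ∀ n (h : n < d), σ ⟨n, h⟩ ≠ none → 0 < lam n := by
    intro n h hn
    simp only [hσ] at hn
    by_cases h1 : 0 < g n
    · simpa [hlamdef] using abs_pos.2 (ne_of_gt h1)
    · by_cases h2 : g n < 0
      · simpa [hlamdef] using abs_pos.2 (ne_of_lt h2)
      · simp [h1, h2] at hn
  have hrho : ∀ n, n < d → rho d σ lam n = g n := by
    intro n hn
    rw [rho, pat'_lt σ hn]
    simp only [hσ]
    by_cases h1 : 0 < g n
    · simp [h1, hlamdef, abs_of_pos h1]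
    · by_cases h2 : g n < 0
      · simp [h1, h2, hlamdef, abs_of_neg h2]
      · have h3 : g n = 0 := le_antisymm (not_lt.1 h1) (not_lt.1 h2)
        simp [h1, h2, h3]
  have hμ : ∀ i : Fin d, μ0 i = rho d σ lam i.1 + c * lam (i.1+1) := by
    intro i
    have := hgrec i.1 i.isLt
    rw [hrho i.1 i.isLt]
    have hμ'i : μ' i.1 = μ0 i := by simp [hμ', i.isLt]
    simp only [hlamdef]
    rw [this, hμ'i]
    ring
  refine Or.inr ⟨σ, ?_⟩
  rw [hl]
  have hlx : ∀ x, l x = lin d μ0 x := clm_eq_lin d l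
  have : {x ∈ P c d | ∀ y ∈ P c d, l y ≤ l x}
      = {x ∈ P c d | ∀ y ∈ P c d, lin d μ0 y ≤ lin d μ0 x} := by
    ext x; simp only [Set.mem_setOf_eq, hlx]
  rw [this]
  exact argmax_eq hc0 hc hlam0 hlamd hfree hpos hμ

lemma empty_isExposed {A : Set (Fin d → ℝ)} : IsExposed ℝ A (∅ : Set (Fin d → ℝ)) :=
  fun h => absurd h (by simp)

end Exposed


section Iso

open scoped Classical

variable {d : ℕ} {c c' : ℝ}

lemma F_nonempty (hc0 : 0 ≤ c) (hc : c < 1/2) (σ : Fin d → Option Bool) :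
    (F c d σ).Nonempty := ⟨_, xpt_mem_F hc0 hc σ⟩

/-- the pattern of a nonempty exposed face. -/
noncomputable def patOf (hc0 : 0 ≤ c) (hc : c < 1/2) {B : Set (Fin d → ℝ)}
    (hB : IsExposed ℝ (P c d) B) (hne : B.Nonempty) : Fin d → Option Bool :=
  Classical.choose ((exposed_classify hc0 hc hB).resolve_left hne.ne_empty)

lemma patOf_spec (hc0 : 0 ≤ c) (hc : c < 1/2) {B : Set (Fin d → ℝ)}
    (hB : IsExposed ℝ (P c d) B) (hne : B.Nonempty) :
    B = F c d (patOf hc0 hc hB hne) :=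
  Classical.choose_spec ((exposed_classify hc0 hc hB).resolve_left hne.ne_empty)

noncomputable def tr (hc0 : 0 ≤ c) (hc : c < 1/2) (hc0' : 0 ≤ c') (hc' : c' < 1/2) :
    {F // IsExposed ℝ (P c d) F} → {F // IsExposed ℝ (P c' d) F} := fun B =>
  if h : B.1.Nonempty then ⟨F c' d (patOf hc0 hc B.2 h), F_isExposed hc0' hc' _⟩
  else ⟨∅, empty_isExposed⟩

lemma tr_pos (hc0 : 0 ≤ c) (hc : c < 1/2) (hc0' : 0 ≤ c') (hc' : c' < 1/2)
    (B : {F // IsExposed ℝ (P c d) F}) (h : B.1.Nonempty) :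
    tr hc0 hc hc0' hc' B = ⟨F c' d (patOf hc0 hc B.2 h), F_isExposed hc0' hc' _⟩ := by
  simp only [tr, dif_pos h]

lemma tr_neg (hc0 : 0 ≤ c) (hc : c < 1/2) (hc0' : 0 ≤ c') (hc' : c' < 1/2)
    (B : {F // IsExposed ℝ (P c d) F}) (h : ¬ B.1.Nonempty) :
    tr hc0 hc hc0' hc' B = ⟨∅, empty_isExposed⟩ := by
  simp only [tr, dif_neg h]

lemma patOf_F (hc0 : 0 ≤ c) (hc : c < 1/2) (σ : Fin d → Option Bool)
    (hB : IsExposed ℝ (P c d) (F c d σ)) (hne : (F c d σ).Nonempty) :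
    patOf hc0 hc hB hne = σ :=
  (F_inj hc0 hc (patOf_spec hc0 hc hB hne).symm)

lemma tr_tr (hc0 : 0 ≤ c) (hc : c < 1/2) (hc0' : 0 ≤ c') (hc' : c' < 1/2)
    (B : {F // IsExposed ℝ (P c d) F}) :
    tr hc0' hc' hc0 hc (tr hc0 hc hc0' hc' B) = B := by
  by_cases h : B.1.Nonempty
  · rw [tr_pos hc0 hc hc0' hc' B h]
    rw [tr_pos hc0' hc' hc0 hc _ (F_nonempty hc0' hc' _)]
    apply Subtype.ext
    simp only
    rw [patOf_F hc0' hc' _ _ _]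
    exact (patOf_spec hc0 hc B.2 h).symm
  · rw [tr_neg hc0 hc hc0' hc' B h]
    rw [tr_neg hc0' hc' hc0 hc _ (by simp)]
    apply Subtype.ext
    simp only
    exact (Set.not_nonempty_iff_eq_empty.1 h).symm

lemma tr_le_iff (hc0 : 0 ≤ c) (hc : c < 1/2) (hc0' : 0 ≤ c') (hc' : c' < 1/2)
    (B B' : {F // IsExposed ℝ (P c d) F}) :
    tr hc0 hc hc0' hc' B ≤ tr hc0 hc hc0' hc' B' ↔ B ≤ B' := by
  have hBle : ∀ (X Y : {F // IsExposed ℝ (P c d) F}), (X ≤ Y) = (X.1 ⊆ Y.1) := fun _ _ => rfl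
  by_cases h : B.1.Nonempty
  · by_cases h' : B'.1.Nonempty
    · rw [tr_pos hc0 hc hc0' hc' B h, tr_pos hc0 hc hc0' hc' B' h']
      show F c' d _ ⊆ F c' d _ ↔ B.1 ⊆ B'.1
      rw [F_subset_iff hc0' hc' _ _]
      conv_rhs => rw [patOf_spec hc0 hc B.2 h, patOf_spec hc0 hc B'.2 h']
      exact (F_subset_iff hc0 hc _ _).symm
    · rw [tr_pos hc0 hc hc0' hc' B h, tr_neg hc0 hc hc0' hc' B' h']
      have hB' : B'.1 = ∅ := Set.not_nonempty_iff_eq_empty.1 h'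
      constructor
      · intro hle
        have hmem : (xpt c' d _) ∈ (∅ : Set (Fin d → ℝ)) := hle (xpt_mem_F hc0' hc' _)
        exact absurd hmem (Set.notMem_empty _)
      · intro hle
        obtain ⟨x, hx⟩ := h
        have hmem : x ∈ B'.1 := hle hx
        rw [hB'] at hmem
        exact absurd hmem (Set.notMem_empty _)
  · rw [tr_neg hc0 hc hc0' hc' B h]
    have hB : B.1 = ∅ := Set.not_nonempty_iff_eq_empty.1 h
    constructor
    · intro _; show B.1 ⊆ B'.1; rw [hB]; exact Set.empty_subset _
    · intro _; show (∅ : Set (Fin d → ℝ)) ⊆ _; exact Set.empty_subset _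

end Iso


section Vertices

variable {c : ℝ} {d : ℕ}

lemma bd_constraint (hc0 : 0 ≤ c) (hc : c < 1/2) {t : ℝ} (ht0 : 0 ≤ t) (ht1 : t ≤ 1) (b : Bool) :
    c * t ≤ bd c t b ∧ bd c t b ≤ 1 - c * t := by
  obtain ⟨h0, h1, h2, h3, h4⟩ := bounds_aux hc0 hc ht0 ht1
  cases b <;> simp [bd] <;> linarith

/-- a point satisfying all tightness equations has coordinates in `[0,1]`. -/
lemma tight_bound (hc0 : 0 ≤ c) (hc : c < 1/2) {x : Fin d → ℝ} {ε : Fin d → Bool}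
    (hx : ∀ (n : ℕ) (h : n < d), x ⟨n, h⟩ = bd c (Y d x n) (ε ⟨n, h⟩)) (n : ℕ) :
    0 ≤ Y d x n ∧ Y d x n ≤ 1 := by
  induction n with
  | zero => norm_num
  | succ m ih =>
    by_cases h : m < d
    · rw [Y_succ d x m h, hx m h]
      exact bd_mem (hc0 := hc0) hc ih.1 ih.2 _
    · rw [Y_succ_ge d x m h]; norm_num

lemma tight_mem_P (hc0 : 0 ≤ c) (hc : c < 1/2) {x : Fin d → ℝ} {ε : Fin d → Bool}
    (hx : ∀ (n : ℕ) (h : n < d), x ⟨n, h⟩ = bd c (Y d x n) (ε ⟨n, h⟩)) :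
    x ∈ P c d := by
  intro n hn
  obtain ⟨h0, h1⟩ := tight_bound hc0 hc hx n
  rw [Y_succ d x n hn, hx n hn]
  exact bd_constraint hc0 hc h0 h1 _

lemma tight_unique (hc0 : 0 ≤ c) (hc : c < 1/2) {x x' : Fin d → ℝ} {ε : Fin d → Bool}
    (hx : ∀ (n : ℕ) (h : n < d), x ⟨n, h⟩ = bd c (Y d x n) (ε ⟨n, h⟩))
    (hx' : ∀ (n : ℕ) (h : n < d), x' ⟨n, h⟩ = bd c (Y d x' n) (ε ⟨n, h⟩)) :
    x = x' := by
  have key : ∀ n, Y d x n = Y d x' n := by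
    intro n
    induction n with
    | zero => rfl
    | succ m ih =>
      by_cases h : m < d
      · rw [Y_succ d x m h, Y_succ d x' m h, hx m h, hx' m h, ih]
      · rw [Y_succ_ge d x m h, Y_succ_ge d x' m h]
  funext i
  have := key (i.1 + 1)
  rwa [Y_succ d x i.1 i.isLt, Y_succ d x' i.1 i.isLt, Fin.eta] at this

lemma xpt_tight (hc0 : 0 ≤ c) (hc : c < 1/2) (ε : Fin d → Bool) (n : ℕ) (h : n < d) :
    xpt c d (fun i => some (ε i)) ⟨n, h⟩
      = bd c (Y d (xpt c d (fun i => some (ε i))) n) (ε ⟨n, h⟩) := by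
  show z c d _ (n+1) = _
  rw [Y_xpt]
  exact z_succ_some (fun i => some (ε i)) n h (ε ⟨n, h⟩) rfl

lemma tight_F_eq_singleton (hc0 : 0 ≤ c) (hc : c < 1/2) {x : Fin d → ℝ} {ε : Fin d → Bool}
    (hx : ∀ (n : ℕ) (h : n < d), x ⟨n, h⟩ = bd c (Y d x n) (ε ⟨n, h⟩)) :
    F c d (fun i => some (ε i)) = {x} := by
  apply Set.eq_singleton_iff_unique_mem.2
  constructor
  · refine ⟨tight_mem_P hc0 hc hx, fun i b hb => ?_⟩
    have hb' : b = ε i := by simpa using hb.symm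
    subst hb'
    rw [Y_succ d x i.1 i.isLt, Fin.eta]
    have := hx i.1 i.isLt
    rwa [Fin.eta] at this
  · intro y hy
    refine tight_unique hc0 hc (fun n h => ?_) hx
    have := hy.2 ⟨n, h⟩ (ε ⟨n, h⟩) rfl
    rwa [Y_succ d y n h] at this

lemma tight_extremePoint (hc0 : 0 ≤ c) (hc : c < 1/2) {x : Fin d → ℝ} {ε : Fin d → Bool}
    (hx : ∀ (n : ℕ) (h : n < d), x ⟨n, h⟩ = bd c (Y d x n) (ε ⟨n, h⟩)) :
    x ∈ (P c d).extremePoints ℝ := by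
  have hexp := F_isExposed hc0 hc (d := d) (fun i => some (ε i))
  rw [tight_F_eq_singleton hc0 hc hx] at hexp
  exact isExtreme_singleton.1 hexp.isExtreme

end Vertices


section Perturb

open scoped Classical

variable {c : ℝ} {d : ℕ}

lemma extreme_tight (hc0 : 0 ≤ c) (hc : c < 1/2) {x : Fin d → ℝ}
    (hx : x ∈ (P c d).extremePoints ℝ) :
    ∃ ε : Fin d → Bool, ∀ (n : ℕ) (h : n < d), x ⟨n, h⟩ = bd c (Y d x n) (ε ⟨n, h⟩) := by
  obtain ⟨hxP, hext⟩ := hx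
  by_cases hfree : ∀ (n : ℕ), n < d → Y d x (n+1) = bd c (Y d x n) true ∨
      Y d x (n+1) = bd c (Y d x n) false
  · refine ⟨fun i => if Y d x (i.1+1) = bd c (Y d x i.1) true then true else false,
      fun n h => ?_⟩
    rcases hfree n h with ht | hf
    · rw [← Y_succ d x n h]
      simp only [ht, if_pos]
    · rw [← Y_succ d x n h]
      by_cases ht : Y d x (n+1) = bd c (Y d x n) true
      · simp only [ht, if_pos]
      · simp only [if_neg ht]; exact hf
  · exfalso
    push_neg at hfree
    obtain ⟨n₀, hn₀d, hnt, hnf⟩ := hfree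
    -- perturbation direction
    set v : ℕ → ℝ := fun n => Nat.rec 0 (fun m vm =>
      if m = n₀ then 1
      else if Y d x (m+1) = bd c (Y d x m) true then -c * vm
      else if Y d x (m+1) = bd c (Y d x m) false then c * vm
      else 0) n with hv
    have hv0 : v 0 = 0 := rfl
    have hvs : ∀ m, v (m+1) =
        (if m = n₀ then 1
        else if Y d x (m+1) = bd c (Y d x m) true then -c * v m
        else if Y d x (m+1) = bd c (Y d x m) false then c * v m
        else 0) := fun m => rfl
    have hc1 : c ≤ 1 := by linarith
    have hvb : ∀ n, -1 ≤ v n ∧ v n ≤ 1 := by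
      intro n
      induction n with
      | zero => rw [hv0]; norm_num
      | succ m ih =>
        rw [hvs m]
        by_cases h1 : m = n₀
        · rw [if_pos h1]; norm_num
        · rw [if_neg h1]
          by_cases h2 : Y d x (m+1) = bd c (Y d x m) true
          · rw [if_pos h2]; constructor <;> nlinarith [ih.1, ih.2]
          · rw [if_neg h2]
            by_cases h3 : Y d x (m+1) = bd c (Y d x m) false
            · rw [if_pos h3]; constructor <;> nlinarith [ih.1, ih.2]
            · rw [if_neg h3]; norm_num
    -- slack
    set Sf : Finset ℕ := (Finset.range d).filter (fun n =>
      Y d x (n+1) ≠ bd c (Y d x n) true ∧ Y d x (n+1) ≠ bd c (Y d x n) false) with hSf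
    have hn₀S : n₀ ∈ Sf := by
      rw [hSf, Finset.mem_filter, Finset.mem_range]
      exact ⟨hn₀d, hnt, hnf⟩
    set slack : ℕ → ℝ := fun n =>
      min (Y d x (n+1) - c * Y d x n) (1 - c * Y d x n - Y d x (n+1)) with hslack
    have hspos : ∀ n ∈ Sf, 0 < slack n := by
      intro n hn
      rw [hSf, Finset.mem_filter, Finset.mem_range] at hn
      obtain ⟨hnd, h1, h2⟩ := hn
      obtain ⟨hl, hu⟩ := hxP n hnd
      have h1' : Y d x (n+1) ≠ 1 - c * Y d x n := by simpa [bd] using h1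
      have h2' : Y d x (n+1) ≠ c * Y d x n := by simpa [bd] using h2
      rw [hslack]
      simp only [lt_min_iff]
      constructor
      · have := lt_of_le_of_ne hl (Ne.symm h2')
        linarith
      · have := lt_of_le_of_ne hu h1'
        linarith
    set m₀ : ℝ := Sf.inf' ⟨n₀, hn₀S⟩ slack with hm₀
    have hm₀pos : 0 < m₀ := by
      rw [hm₀]
      exact (Finset.lt_inf'_iff ..).2 hspos
    set δ : ℝ := m₀ / 4 with hδdef
    have hδ : 0 < δ := by rw [hδdef]; linarith
    -- the perturbed points
    have main : ∀ e : ℝ, -1 ≤ e → e ≤ 1 →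
        (fun i : Fin d => x i + e * δ * v (i.1+1)) ∈ P c d := by
      intro e he1 he2
      set xe : Fin d → ℝ := fun i => x i + e * δ * v (i.1+1) with hxe
      have hYe : ∀ n, n ≤ d → Y d xe n = Y d x n + e * δ * v n := by
        intro n hn
        cases n with
        | zero => rw [Y_zero, Y_zero, hv0]; ring
        | succ k =>
          have h : k < d := hn
          rw [Y_succ d xe k h, Y_succ d x k h]
      intro n hn
      induction n using Nat.strong_induction_on with
      | _ n IH =>
      have hprev : ∀ i < n, c * Y d xe i ≤ Y d xe (i+1) ∧ Y d xe (i+1) ≤ 1 - c * Y d xe i :=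
        fun i hi => IH i hi (lt_trans hi hn)
      obtain ⟨hYe0, hYe1⟩ := prefix_bound hc0 hc (Y d xe) rfl n hprev
      obtain ⟨hb0, hb1, hb2, hb3, hb4⟩ := bounds_aux hc0 hc hYe0 hYe1
      by_cases h2 : Y d x (n+1) = bd c (Y d x n) true
      · have hne : n ≠ n₀ := by
          intro hcontra; rw [hcontra] at h2; exact hnt h2
        have hveq : v (n+1) = -c * v n := by rw [hvs n, if_neg hne, if_pos h2]
        have heq : Y d xe (n+1) = 1 - c * Y d xe n := by
          rw [hYe (n+1) hn, hYe n (le_of_lt hn), hveq, h2, bd_true]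
          ring
        rw [heq]
        constructor
        · linarith
        · linarith
      · by_cases h3 : Y d x (n+1) = bd c (Y d x n) false
        · have hne : n ≠ n₀ := by
            intro hcontra; rw [hcontra] at h3; exact hnf h3
          have hveq : v (n+1) = c * v n := by rw [hvs n, if_neg hne, if_neg h2, if_pos h3]
          have heq : Y d xe (n+1) = c * Y d xe n := by
            rw [hYe (n+1) hn, hYe n (le_of_lt hn), hveq, h3, bd_false]
            ring
          rw [heq]
          constructor
          · linarith
          · linarith
        · -- free index
          have hnS : n ∈ Sf := by
            rw [hSf, Finset.mem_filter, Finset.mem_range]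
            exact ⟨hn, h2, h3⟩
          have hms : m₀ ≤ slack n := Finset.inf'_le slack hnS
          have hs1 : slack n ≤ Y d x (n+1) - c * Y d x n := by
            rw [hslack]; exact min_le_left _ _
          have hs2 : slack n ≤ 1 - c * Y d x n - Y d x (n+1) := by
            rw [hslack]; exact min_le_right _ _
          have habs : ∀ k, -δ ≤ e * δ * v k ∧ e * δ * v k ≤ δ := by
            intro k
            obtain ⟨h1, h2⟩ := hvb k
            have he : |e| ≤ 1 := abs_le.2 ⟨he1, he2⟩
            have hvk : |v k| ≤ 1 := abs_le.2 ⟨h1, h2⟩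
            have habs2 : |e * δ * v k| ≤ δ := by
              rw [abs_mul, abs_mul, abs_of_pos hδ]
              calc |e| * δ * |v k| ≤ 1 * δ * |v k| := by
                    apply mul_le_mul_of_nonneg_right _ (abs_nonneg _)
                    exact mul_le_mul_of_nonneg_right he hδ.le
                _ ≤ 1 * δ * 1 := by
                    apply mul_le_mul_of_nonneg_left hvk
                    linarith
                _ = δ := by ring
            exact abs_le.1 habs2
          obtain ⟨hp2, hp1⟩ := habs n
          obtain ⟨hp4, hp3⟩ := habs (n+1)
          have hcq1 : c * (e * δ * v n) ≤ δ :=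
            le_trans (mul_le_mul_of_nonneg_left hp1 hc0) (by nlinarith)
          have hcq2 : -δ ≤ c * (e * δ * v n) :=
            le_trans (by nlinarith) (mul_le_mul_of_nonneg_left hp2 hc0)
          rw [hYe (n+1) hn, hYe n (le_of_lt hn)]
          have goal1 : c * (Y d x n + e * δ * v n) = c * Y d x n + c * (e * δ * v n) := by ring
          constructor
          · rw [goal1]; linarith
          · rw [goal1]; linarith
    -- contradiction with extremality
    have hpP := main 1 (by norm_num) (by norm_num)
    have hmP := main (-1) (by norm_num) (by norm_num)
    have hseg : x ∈ openSegment ℝ (fun i : Fin d => x i + 1 * δ * v (i.1+1))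
        (fun i : Fin d => x i + (-1) * δ * v (i.1+1)) := by
      refine ⟨1/2, 1/2, by norm_num, by norm_num, by norm_num, ?_⟩
      funext i
      simp only [Pi.add_apply, Pi.smul_apply, smul_eq_mul]
      ring
    have := hext hpP hmP hseg
    have hcontra := congrFun this ⟨n₀, hn₀d⟩
    simp only at hcontra
    have hvn₀ : v (n₀+1) = 1 := by rw [hvs n₀, if_pos rfl]
    rw [hvn₀] at hcontra
    nlinarith [hcontra, hδ]

end Perturb


section TheIso

variable {d : ℕ} {c c' : ℝ}

lemma exposed_iso (hc0 : 0 ≤ c) (hc : c < 1/2) (hc0' : 0 ≤ c') (hc' : c' < 1/2) :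
    Nonempty ({F : Set (Fin d → ℝ) // IsExposed ℝ (P c d) F} ≃o
              {F : Set (Fin d → ℝ) // IsExposed ℝ (P c' d) F}) :=
  ⟨{ toFun := tr hc0 hc hc0' hc'
     invFun := tr hc0' hc' hc0 hc
     left_inv := tr_tr hc0 hc hc0' hc'
     right_inv := tr_tr hc0' hc' hc0 hc
     map_rel_iff' := @fun B B' => tr_le_iff hc0 hc hc0' hc' B B' }⟩

end TheIso

end KM

/-- The standard `d`-cube `[0,1]^d`. -/
def stdCube (d : ℕ) : Set (Fin d → ℝ) := {x | ∀ i, 0 ≤ x i ∧ x i ≤ 1}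

/-- The point of the Klee–Minty cube determined by `ε ∈ {0,1}^d`: for each
`i`, equality holds in the lower bound (`εᵢ = 0`, i.e. `false`) or the upper
bound (`εᵢ = 1`, i.e. `true`) of the `i`-th pair of defining inequalities. -/
def kmVertexEq (d : ℕ) (ε : Fin d → Bool) (x : Fin d → ℝ) : Prop :=
  (∀ h : 0 < d, x ⟨0, h⟩ = if ε ⟨0, h⟩ then 1 else 0) ∧
  ∀ (i : ℕ) (h : i + 1 < d),
    x ⟨i + 1, h⟩ =
      if ε ⟨i + 1, h⟩ then 1 - (1 / 3) * x ⟨i, Nat.lt_of_succ_lt h⟩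
      else (1 / 3) * x ⟨i, Nat.lt_of_succ_lt h⟩

lemma kleeMinty_eq (d : ℕ) : kleeMinty d = KM.P (1/3) d := by
  ext x
  constructor
  · rintro ⟨h0, hs⟩ n hn
    cases n with
    | zero =>
      rw [KM.Y_zero, KM.Y_succ d x 0 hn]
      obtain ⟨ha, hb⟩ := h0 hn
      constructor <;> linarith
    | succ m =>
      rw [KM.Y_succ d x m (Nat.lt_of_succ_lt hn), KM.Y_succ d x (m+1) hn]
      exact hs m hn
  · intro h
    constructor
    · intro h0
      have := h 0 h0
      rw [KM.Y_zero, KM.Y_succ d x 0 h0] at this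
      constructor <;> linarith [this.1, this.2]
    · intro m hm
      have := h (m+1) hm
      rw [KM.Y_succ d x m (Nat.lt_of_succ_lt hm), KM.Y_succ d x (m+1) hm] at this
      exact this

lemma stdCube_eq (d : ℕ) : stdCube d = KM.P 0 d := by
  ext x
  constructor
  · intro h n hn
    rw [KM.Y_succ d x n hn]
    obtain ⟨ha, hb⟩ := h ⟨n, hn⟩
    constructor <;> linarith
  · intro h i
    have := h i.1 i.isLt
    rw [KM.Y_succ d x i.1 i.isLt, Fin.eta] at this
    constructor <;> linarith [this.1, this.2]

lemma kmVertexEq_iff (d : ℕ) (ε : Fin d → Bool) (x : Fin d → ℝ) :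
    kmVertexEq d ε x ↔
      ∀ (n : ℕ) (h : n < d), x ⟨n, h⟩ = KM.bd (1/3) (KM.Y d x n) (ε ⟨n, h⟩) := by
  constructor
  · rintro ⟨h0, hs⟩ n hn
    cases n with
    | zero =>
      rw [KM.Y_zero]
      have := h0 hn
      cases hε : ε ⟨0, hn⟩ <;> rw [hε] at this <;> rw [this] <;> simp [KM.bd]
    | succ m =>
      have := hs m hn
      rw [KM.Y_succ d x m (Nat.lt_of_succ_lt hn)]
      cases hε : ε ⟨m+1, hn⟩ <;> rw [hε] at this <;> simpa [KM.bd] using this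
  · intro h
    constructor
    · intro h0
      have := h 0 h0
      rw [KM.Y_zero] at this
      cases hε : ε ⟨0, h0⟩ <;> rw [hε] at this <;> rw [this] <;> simp [KM.bd]
    · intro m hm
      have := h (m+1) hm
      rw [KM.Y_succ d x m (Nat.lt_of_succ_lt hm)] at this
      cases hε : ε ⟨m+1, hm⟩ <;> rw [hε] at this <;> rw [this] <;> simp [KM.bd]

/-- The Klee–Minty cube in dimension `d` is combinatorially isomorphic to the
`d`-cube: its exposed-face poset is order-isomorphic to that of `[0,1]^d`.
In particular its vertices are in bijection with `{0,1}^d`, the vertex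
corresponding to `ε` being determined by the equality choices `ε` in the
defining inequalities. -/
theorem kleeMinty_comb_iso_cube (d : ℕ) :
    Nonempty ({F : Set (Fin d → ℝ) // IsExposed ℝ (kleeMinty d) F} ≃o
              {F : Set (Fin d → ℝ) // IsExposed ℝ (stdCube d) F}) ∧
    (∀ ε : Fin d → Bool, ∃! x : Fin d → ℝ, kmVertexEq d ε x) ∧
    (∀ (ε : Fin d → Bool) (x : Fin d → ℝ), kmVertexEq d ε x →
        x ∈ (kleeMinty d).extremePoints ℝ) ∧
    (∀ x ∈ (kleeMinty d).extremePoints ℝ, ∃ ε : Fin d → Bool, kmVertexEq d ε x) ∧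
    (∀ (ε ε' : Fin d → Bool) (x : Fin d → ℝ),
        kmVertexEq d ε x → kmVertexEq d ε' x → ε = ε') := by
  have hc0 : (0:ℝ) ≤ 1/3 := by norm_num
  have hc : (1/3:ℝ) < 1/2 := by norm_num
  have h00 : (0:ℝ) ≤ 0 := le_refl 0
  have h0h : (0:ℝ) < 1/2 := by norm_num
  refine ⟨?_, ?_, ?_, ?_, ?_⟩
  · rw [kleeMinty_eq d, stdCube_eq d]
    exact KM.exposed_iso hc0 hc h00 h0h
  · intro ε
    refine ⟨KM.xpt (1/3) d (fun i => some (ε i)), ?_, ?_⟩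
    · show kmVertexEq d ε _
      rw [kmVertexEq_iff]
      exact fun n h => KM.xpt_tight hc0 hc ε n h
    · intro y hy
      rw [kmVertexEq_iff] at hy
      exact KM.tight_unique hc0 hc hy (fun n h => KM.xpt_tight hc0 hc ε n h)
  · intro ε x hx
    rw [kmVertexEq_iff] at hx
    rw [kleeMinty_eq d]
    exact KM.tight_extremePoint hc0 hc hx
  · intro x hx
    rw [kleeMinty_eq d] at hx
    obtain ⟨ε, hε⟩ := KM.extreme_tight hc0 hc hx
    exact ⟨ε, (kmVertexEq_iff d ε x).2 hε⟩
  · intro ε ε' x h h'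
    rw [kmVertexEq_iff] at h h'
    funext i
    have h1 := h i.1 i.isLt
    have h2 := h' i.1 i.isLt
    rw [Fin.eta] at h1 h2
    obtain ⟨hb0, hb1⟩ := KM.tight_bound hc0 hc h i.1
    have hbd : KM.bd (1/3) (KM.Y d x i.1) (ε i) = KM.bd (1/3) (KM.Y d x i.1) (ε' i) := by
      rw [← h1, ← h2]
    have hne13 := KM.bd_ne hc0 hc hb0 hb1
    cases hεi : ε i <;> cases hεi' : ε' i <;> rw [hεi, hεi'] at hbd <;>
      first
        | rfl
        | (exact absurd hbd.symm hne13)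
        | (exact absurd hbd hne13)
end

section
/- At a rubber-band equilibrium, every free vertex lies in the convex hull of the fixed vertices: if x : V → ℝ³ satisfies Σ_{w ∈ N(v)} δ_{vw}(x_v − x_w) = 0 with δ_{vw} > 0 for all v ∉ Φ, and G is connected with Φ ≠ ∅, then x_v ∈ conv{ x_u : u ∈ Φ } for every v ∈ V. -/
open Set Finset

/-- **Discrete maximum principle for rubber-band equilibria.**  If a placement
`x : V → ℝ³` of a finite connected graph satisfies the equilibrium condition
`Σ_{w ∈ N(v)} δ_{vw}(x_v - x_w) = 0` with positive weights at every vertex not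
in the nonempty set `Φ` of fixed vertices, then every vertex lies in the
convex hull of the positions of the fixed vertices. -/
theorem rubber_band_maximum_principle {V : Type*} [Fintype V] [DecidableEq V]
    (G : SimpleGraph V) [DecidableRel G.Adj] (hGconn : G.Connected)
    (Φ : Set V) (hΦ : Φ.Nonempty)
    (δ : V → V → ℝ) (hδpos : ∀ v w, G.Adj v w → 0 < δ v w)
    (x : V → EuclideanSpace ℝ (Fin 3))
    (heq : ∀ v ∉ Φ, ∑ w ∈ G.neighborFinset v, δ v w • (x v - x w) = 0) :
    ∀ v : V, x v ∈ convexHull ℝ (x '' Φ) := by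
  classical
  intro v
  by_contra hv
  set K := convexHull ℝ (x '' Φ) with hKdef
  have hKconv : Convex ℝ K := convex_convexHull ℝ _
  have hKclosed : IsClosed K := (Set.toFinite (x '' Φ)).isClosed_convexHull (𝕜 := ℝ)
  obtain ⟨f, c, hfc1, hfc2⟩ := geometric_hahn_banach_point_closed hKconv hKclosed hv
  set g : V → ℝ := fun w => -(f (x w)) with hg
  obtain ⟨v0, -, hv0⟩ :=
    Finset.exists_max_image (Finset.univ : Finset V) g ⟨v, Finset.mem_univ v⟩
  -- propagation of the maximum across an edge, away from Φ
  have hprop : ∀ a ∉ Φ, ∀ w, G.Adj a w → g a = g v0 → g w = g v0 := by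
    intro a haΦ w haw hmax
    by_contra hne
    have hwlt : g w < g v0 := lt_of_le_of_ne (hv0 w (Finset.mem_univ w)) hne
    have h1 : ∑ z ∈ G.neighborFinset a, δ a z * (g a - g z) = 0 := by
      have h2 := congrArg f (heq a haΦ)
      rw [map_sum, map_zero] at h2
      simp only [map_smul, map_sub, smul_eq_mul] at h2
      calc ∑ z ∈ G.neighborFinset a, δ a z * (g a - g z)
          = -∑ z ∈ G.neighborFinset a, δ a z * (f (x a) - f (x z)) := by
            rw [← Finset.sum_neg_distrib]
            refine Finset.sum_congr rfl fun z _ => ?_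
            simp only [hg]; ring
        _ = 0 := by rw [h2, neg_zero]
    have hpos : 0 < ∑ z ∈ G.neighborFinset a, δ a z * (g a - g z) := by
      refine Finset.sum_pos' ?_ ⟨w, (G.mem_neighborFinset a w).2 haw, ?_⟩
      · intro z hz
        have hadj := (G.mem_neighborFinset a z).1 hz
        have := hv0 z (Finset.mem_univ z)
        have h0 : 0 ≤ g a - g z := by rw [hmax]; linarith
        exact mul_nonneg (le_of_lt (hδpos a z hadj)) h0
      · have h0 : 0 < g a - g w := by rw [hmax]; linarith
        exact mul_pos (hδpos a w haw) h0
    rw [h1] at hpos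
    exact lt_irrefl 0 hpos
  -- along a walk from a maximizer into Φ, the maximum is attained in Φ
  have hwalk : ∀ {a b : V} (_ : G.Walk a b), b ∈ Φ → g a = g v0 →
      ∃ u ∈ Φ, g u = g v0 := by
    intro a b p
    induction p with
    | nil => exact fun hb ha => ⟨_, hb, ha⟩
    | @cons a' c' b' h p ih =>
      intro hb ha
      by_cases haΦ : a' ∈ Φ
      · exact ⟨_, haΦ, ha⟩
      · exact ih hb (hprop a' haΦ c' h ha)
  obtain ⟨u0, hu0⟩ := hΦ
  obtain ⟨u, huΦ, hu⟩ := hwalk (hGconn v0 u0).some hu0 rfl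
  have hxu : x u ∈ K := subset_convexHull ℝ _ ⟨u, huΦ, rfl⟩
  have h1 : g v ≤ g u := by rw [hu]; exact hv0 v (Finset.mem_univ v)
  have h2 : f (x u) ≤ f (x v) := by simpa [hg, neg_le_neg_iff] using h1
  have h3 : c < f (x u) := hfc2 _ hxu
  linarith
end
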